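/- arXiv:2210.02319 — 6 statements merged into one kernel-verified Lean document; each statement's English description precedes it below -/
import Mathlib

section
/- Fix an integer k ≥ 1 and an integer i with 0 ≤ i ≤ k. For the absorbing birth–death chain started at i, the probability that the trajectory never exceeds k (i.e. μ_i({ω ∈ ℤ^ℕ : ∀ n ∈ ℕ, ω_n ≤ k})) equals (∑_{n=i}^{k} c_n) / (1 + ∑_{n=0}^{k} c_n). -/
open MeasureTheory

/-- Transition probabilities of the absorbing birth-death chain on `ℤ`:
for `i ≥ 0`, move to `i+1` with probability `p i` and to `i-1` with probability `q i`;
every `i < 0` is absorbing. -/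
noncomputable def bdKernel (p q : ℕ → ℝ) : ℤ → ℤ → ℝ := fun i j =>
  if 0 ≤ i then
    (if j = i + 1 then p i.toNat else if j = i - 1 then q i.toNat else 0)
  else
    (if j = i then 1 else 0)

/-- `μ i` is the law (on path space, obtained via Ionescu–Tulcea) of the absorbing
birth-death chain started at `i`, characterised by its finite-dimensional (cylinder)
distributions. -/
def IsBDLaw (p q : ℕ → ℝ) (μ : ℤ → Measure (ℕ → ℤ)) : Prop :=
  ∀ (i : ℤ) (n : ℕ) (f : ℕ → ℤ),
    μ i {ω : ℕ → ℤ | ∀ m ≤ n, ω m = f m} =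
      ENNReal.ofReal ((if f 0 = i then (1 : ℝ) else 0) *
        ∏ m ∈ Finset.range n, bdKernel p q (f m) (f (m + 1)))

/-- `cseq p q n = ∏_{j=0}^{n} q_j / p_j`. -/
noncomputable def cseq (p q : ℕ → ℝ) (n : ℕ) : ℝ :=
  ∏ j ∈ Finset.range (n + 1), q j / p j



open Filter



noncomputable def Useq (p q : ℕ → ℝ) (k : ℕ) : ℕ → ℤ → ℝ
  | 0, j => if j ≤ (k : ℤ) then 1 else 0
  | (n+1), j =>
      if j ≤ (k : ℤ) then
        (if 0 ≤ j then p j.toNat * Useq p q k n (j+1) + q j.toNat * Useq p q k n (j-1)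
         else Useq p q k n j)
      else 0

lemma Useq_succ_def (p q : ℕ → ℝ) (k n : ℕ) (j : ℤ) : Useq p q k (n+1) j =
    if j ≤ (k : ℤ) then
      (if 0 ≤ j then p j.toNat * Useq p q k n (j+1) + q j.toNat * Useq p q k n (j-1)
       else Useq p q k n j)
    else 0 := rfl

section A
variable {p q : ℕ → ℝ} (hp : ∀ i, p i ∈ Set.Ioo (0 : ℝ) 1) (hq : ∀ i, q i ∈ Set.Ioo (0 : ℝ) 1)
  (hpq : ∀ i, p i + q i = 1) (k : ℕ)

include hp hq in
lemma cseq_pos (n : ℕ) : 0 < cseq p q n :=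
  Finset.prod_pos fun j _ => div_pos (hq j).1 (hp j).1

include hp hq in
lemma Useq_nonneg : ∀ n j, 0 ≤ Useq p q k n j := by
  intro n
  induction n with
  | zero => intro j; simp only [Useq]; split <;> norm_num
  | succ n ih =>
    intro j
    simp only [Useq]
    split
    · split
      · exact add_nonneg (mul_nonneg (hp _).1.le (ih _)) (mul_nonneg (hq _).1.le (ih _))
      · exact ih _
    · exact le_refl _

include hp hq hpq in
lemma Useq_le_one : ∀ n j, Useq p q k n j ≤ 1 := by
  intro n
  induction n with
  | zero => intro j; simp only [Useq]; split <;> norm_num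
  | succ n ih =>
    intro j
    simp only [Useq]
    split
    · split
      · calc p j.toNat * Useq p q k n (j+1) + q j.toNat * Useq p q k n (j-1)
            ≤ p j.toNat * 1 + q j.toNat * 1 := by
              gcongr
              · exact (hp _).1.le
              · exact ih _
              · exact (hq _).1.le
              · exact ih _
          _ = 1 := by rw [mul_one, mul_one, hpq]
      · exact ih _
    · norm_num

lemma Useq_neg : ∀ n, ∀ j : ℤ, j < 0 → Useq p q k n j = 1 := by
  intro n
  induction n with
  | zero => intro j hj; simp only [Useq, if_pos (hj.le.trans (Int.ofNat_nonneg k))]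
  | succ n ih =>
    intro j hj
    simp only [Useq, if_pos (hj.le.trans (Int.ofNat_nonneg k)), if_neg (not_le.2 hj)]
    exact ih j hj

lemma Useq_gt : ∀ n, ∀ j : ℤ, (k : ℤ) < j → Useq p q k n j = 0 := by
  intro n
  cases n <;> (intro j hj; simp only [Useq, if_neg (not_le.2 hj)])

include hp hq hpq in
lemma Useq_antitone (j : ℤ) : Antitone fun n => Useq p q k n j := by
  have key : ∀ n j, Useq p q k (n+1) j ≤ Useq p q k n j := by
    intro n
    induction n with
    | zero =>
      intro j
      by_cases hjk : j ≤ (k : ℤ)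
      · by_cases hj0 : 0 ≤ j
        · simp only [Useq, if_pos hjk, if_pos hj0]
          calc p j.toNat * Useq p q k 0 (j+1) + q j.toNat * Useq p q k 0 (j-1)
              ≤ p j.toNat * 1 + q j.toNat * 1 := by
                gcongr
                · exact (hp _).1.le
                · exact Useq_le_one hp hq hpq k 0 _
                · exact (hq _).1.le
                · exact Useq_le_one hp hq hpq k 0 _
            _ = 1 := by rw [mul_one, mul_one, hpq]
        · simp only [Useq, if_pos hjk, if_neg hj0]; exact le_rfl
      · simp only [Useq, if_neg hjk, le_refl]
    | succ n ih =>
      intro j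
      show Useq p q k (n+2) j ≤ Useq p q k (n+1) j
      by_cases hjk : j ≤ (k : ℤ)
      · by_cases hj0 : 0 ≤ j
        · conv_lhs => rw [Useq_succ_def p q k (n+1) j, if_pos hjk, if_pos hj0]
          conv_rhs => rw [Useq_succ_def p q k n j, if_pos hjk, if_pos hj0]
          gcongr
          · exact (hp _).1.le
          · exact ih _
          · exact (hq _).1.le
          · exact ih _
        · conv_lhs => rw [Useq_succ_def p q k (n+1) j, if_pos hjk, if_neg hj0]
      · conv_lhs => rw [Useq_succ_def p q k (n+1) j, if_neg hjk]
        exact Useq_nonneg hp hq k _ j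
  exact antitone_nat_of_succ_le fun n => key n j

/-- The limit of `Useq`. -/
noncomputable def Ulim (p q : ℕ → ℝ) (k : ℕ) (j : ℤ) : ℝ := ⨅ n, Useq p q k n j

include hp hq hpq in
lemma Useq_tendsto (j : ℤ) :
    Tendsto (fun n => Useq p q k n j) atTop (nhds (Ulim p q k j)) :=
  tendsto_atTop_ciInf (Useq_antitone hp hq hpq k j)
    ⟨0, by rintro x ⟨n, rfl⟩; exact Useq_nonneg hp hq k n j⟩

lemma Ulim_neg (j : ℤ) (hj : j < 0) : Ulim p q k j = 1 := by
  simp only [Ulim, Useq_neg k _ j hj, ciInf_const]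

lemma Ulim_gt (j : ℤ) (hj : (k : ℤ) < j) : Ulim p q k j = 0 := by
  simp only [Ulim, Useq_gt k _ j hj, ciInf_const]

include hp hq hpq in
lemma Ulim_harmonic (j : ℤ) (hj0 : 0 ≤ j) (hjk : j ≤ (k : ℤ)) :
    Ulim p q k j = p j.toNat * Ulim p q k (j+1) + q j.toNat * Ulim p q k (j-1) := by
  have h1 : Tendsto (fun n => Useq p q k (n+1) j) atTop (nhds (Ulim p q k j)) :=
    (Useq_tendsto hp hq hpq k j).comp (tendsto_add_atTop_nat 1)
  have h2 : Tendsto (fun n => Useq p q k (n+1) j) atTop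
      (nhds (p j.toNat * Ulim p q k (j+1) + q j.toNat * Ulim p q k (j-1))) := by
    have : (fun n => Useq p q k (n+1) j) =
        fun n => p j.toNat * Useq p q k n (j+1) + q j.toNat * Useq p q k n (j-1) := by
      funext n; simp only [Useq, if_pos hjk, if_pos hj0]
    rw [this]
    exact ((Useq_tendsto hp hq hpq k (j+1)).const_mul _).add
      ((Useq_tendsto hp hq hpq k (j-1)).const_mul _)
  exact tendsto_nhds_unique h1 h2

include hp hq hpq in
/-- The value of the limit. -/
lemma Ulim_eq (i : ℕ) (hik : i ≤ k) :
    Ulim p q k i = (∑ n ∈ Finset.Icc i k, cseq p q n) /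
      (1 + ∑ n ∈ Finset.range (k + 1), cseq p q n) := by
  set S : ℝ := 1 + ∑ n ∈ Finset.range (k + 1), cseq p q n with hS
  have hSpos : 0 < S := by
    have : 0 ≤ ∑ n ∈ Finset.range (k + 1), cseq p q n :=
      Finset.sum_nonneg fun n _ => (cseq_pos hp hq n).le
    linarith
  set G : ℕ → ℝ := fun m => Ulim p q k ((m : ℤ) - 1) with hG
  set D : ℕ → ℝ := fun m => G (m+1) - G m with hD
  have hG0 : G 0 = 1 := Ulim_neg k _ (by norm_num)
  have hGtop : G (k+2) = 0 := Ulim_gt k _ (by push_cast; omega)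
  have hrec : ∀ m : ℕ, m ≤ k → D (m+1) = (q m / p m) * D m := by
    intro m hm
    have h0 : (0:ℤ) ≤ (m:ℤ) + 1 - 1 := by omega
    have hk' : (m:ℤ) + 1 - 1 ≤ (k:ℤ) := by push_cast; omega
    have := Ulim_harmonic hp hq hpq k ((m:ℤ) + 1 - 1) h0 hk'
    have htn : ((m:ℤ) + 1 - 1).toNat = m := by omega
    rw [htn] at this
    have e1 : (m:ℤ) + 1 - 1 + 1 = ((m+2 : ℕ) : ℤ) - 1 := by push_cast; ring
    have e2 : (m:ℤ) + 1 - 1 - 1 = ((m : ℕ) : ℤ) - 1 := by push_cast; ring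
    have e3 : (m:ℤ) + 1 - 1 = ((m+1 : ℕ) : ℤ) - 1 := by push_cast; ring
    rw [e1, e2] at this
    conv_lhs at this => rw [e3]
    -- this : G (m+1) = p m * G (m+2) + q m * G m
    have hpq' := hpq m
    have hpm := (hp m).1
    change G (m+1) = p m * G (m+2) + q m * G m at this
    simp only [hD]
    rw [div_mul_eq_mul_div, eq_div_iff (ne_of_gt hpm)]
    have harg : m + 1 + 1 = m + 2 := by omega
    rw [harg]
    linear_combination -this - G (m+1) * hpq'
  have hDc : ∀ m : ℕ, m ≤ k → D (m+1) = cseq p q m * D 0 := by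
    intro m
    induction m with
    | zero =>
      intro _
      rw [hrec 0 (Nat.zero_le k)]
      simp [cseq]
    | succ m ih =>
      intro hm
      rw [hrec (m+1) hm, ih (by omega)]
      simp only [cseq, Finset.prod_range_succ]
      ring
  have hsum : ∀ N : ℕ, ∑ m ∈ Finset.range N, D m = G N - G 0 := by
    intro N
    exact Finset.sum_range_sub G N
  have htot : D 0 * S = -1 := by
    have h1 : ∑ m ∈ Finset.range (k+2), D m = G (k+2) - G 0 := hsum (k+2)
    rw [hGtop, hG0] at h1
    have h2 : ∑ m ∈ Finset.range (k+2), D m =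
        D 0 + ∑ m ∈ Finset.range (k+1), D (m+1) := by
      rw [Finset.sum_range_succ' D (k+1)]; ring
    have h3 : ∑ m ∈ Finset.range (k+1), D (m+1) =
        ∑ m ∈ Finset.range (k+1), cseq p q m * D 0 := by
      refine Finset.sum_congr rfl fun m hm => hDc m (by simpa [Nat.lt_succ_iff] using hm)
    rw [h2, h3, ← Finset.sum_mul] at h1
    rw [hS]; linarith [h1]
  -- now compute G (i+1)
  have hGi : G (i+1) = 1 + ∑ m ∈ Finset.range (i+1), D m := by
    have := hsum (i+1); rw [hG0] at this; linarith
  have hsplit : ∑ m ∈ Finset.range (i+1), D m = D 0 * (1 + ∑ m ∈ Finset.range i, cseq p q m) := by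
    rw [Finset.sum_range_succ' D i]
    have h3 : ∑ m ∈ Finset.range i, D (m+1) = ∑ m ∈ Finset.range i, cseq p q m * D 0 :=
      Finset.sum_congr rfl fun m hm => hDc m (by have := Finset.mem_range.1 hm; omega)
    rw [h3, ← Finset.sum_mul]; ring
  have hD0 : D 0 = -1 / S := by field_simp at htot ⊢; linarith
  have hIcc : ∑ n ∈ Finset.Icc i k, cseq p q n =
      ∑ n ∈ Finset.range (k+1), cseq p q n - ∑ n ∈ Finset.range i, cseq p q n := by
    rw [← Finset.Ico_add_one_right_eq_Icc, Finset.range_eq_Ico, Finset.range_eq_Ico, eq_sub_iff_add_eq, add_comm,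
      Finset.sum_Ico_consecutive _ (Nat.zero_le i) (by omega : i ≤ k + 1)]
  have : Ulim p q k i = G (i+1) := by
    simp only [hG]; norm_num
  rw [this, hGi, hsplit, hD0, hIcc]
  field_simp
  ring

end A








/-- the kernel, valued in `ℝ≥0∞`. -/
noncomputable def Kk (p q : ℕ → ℝ) (a b : ℤ) : ENNReal := ENNReal.ofReal (bdKernel p q a b)

/-- cylinder sets -/
def cyl (k n : ℕ) (g : Fin (n+1) → Set.Iic (k:ℤ)) : Set (ℕ → ℤ) :=
  {ω | ∀ m : Fin (n+1), ω m = (g m : ℤ)}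

/-- cylinder weights -/
noncomputable def Wfun (p q : ℕ → ℝ) (k n : ℕ) (j : ℤ) (g : Fin (n+1) → Set.Iic (k:ℤ)) :
    ENNReal :=
  (if ((g 0 : ℤ)) = j then 1 else 0) *
    ∏ m : Fin n, Kk p q (g m.castSucc) (g m.succ)

lemma ofReal_prod' {α : Type*} (s : Finset α) (f : α → ℝ) (h : ∀ i ∈ s, 0 ≤ f i) :
    ENNReal.ofReal (∏ i ∈ s, f i) = ∏ i ∈ s, ENNReal.ofReal (f i) := by
  classical
  induction s using Finset.induction with
  | empty => simp
  | @insert a s ha ih =>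
    rw [Finset.prod_insert ha, Finset.prod_insert ha,
      ENNReal.ofReal_mul (h a (Finset.mem_insert_self a s)),
      ih fun i hi => h i (Finset.mem_insert_of_mem hi)]

section B
variable {p q : ℕ → ℝ} (hp : ∀ i, p i ∈ Set.Ioo (0 : ℝ) 1) (hq : ∀ i, q i ∈ Set.Ioo (0 : ℝ) 1)
  (hpq : ∀ i, p i + q i = 1) (k : ℕ)

include hp hq in
lemma bdKernel_nonneg (a b : ℤ) : 0 ≤ bdKernel p q a b := by
  unfold bdKernel
  split
  · split
    · exact (hp _).1.le
    · split
      · exact (hq _).1.le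
      · exact le_rfl
  · split <;> norm_num

-- Part B4: measure of a cylinder
include hp hq in
lemma measure_cyl (μ : ℤ → Measure (ℕ → ℤ)) (hlaw : IsBDLaw p q μ) (j : ℤ) (n : ℕ)
    (g : Fin (n+1) → Set.Iic (k:ℤ)) :
    μ j (cyl k n g) = Wfun p q k n j g := by
  classical
  set f : ℕ → ℤ := fun m => if h : m < n + 1 then (g ⟨m, h⟩ : ℤ) else 0 with hf
  have hfg : ∀ m : Fin (n+1), f (m : ℕ) = (g m : ℤ) := by
    intro m
    simp only [hf]
    rw [dif_pos m.isLt]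
  have hset : {ω : ℕ → ℤ | ∀ m ≤ n, ω m = f m} = cyl k n g := by
    ext ω
    constructor
    · intro hω m
      rw [← hfg m]
      exact hω m (Nat.lt_succ_iff.1 m.isLt)
    · intro hω m hm
      have h1 := hω ⟨m, Nat.lt_succ_of_le hm⟩
      exact h1.trans (hfg ⟨m, Nat.lt_succ_of_le hm⟩).symm
  rw [← hset, hlaw j n f]
  have hprod : ∏ m ∈ Finset.range n, bdKernel p q (f m) (f (m + 1)) =
      ∏ m : Fin n, bdKernel p q (g m.castSucc) (g m.succ) := by
    rw [← Fin.prod_univ_eq_prod_range (fun m => bdKernel p q (f m) (f (m + 1))) n]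
    refine Finset.prod_congr rfl fun m _ => ?_
    have e1 : f (m : ℕ) = (g m.castSucc : ℤ) := by
      rw [show ((m : ℕ) : ℕ) = ((m.castSucc : Fin (n+1)) : ℕ) from rfl, hfg]
    have e2 : f ((m : ℕ) + 1) = (g m.succ : ℤ) := by
      rw [show ((m : ℕ) + 1) = ((m.succ : Fin (n+1)) : ℕ) from rfl, hfg]
    rw [e1, e2]
  rw [hprod, ENNReal.ofReal_mul (by split <;> norm_num), Wfun,
    ofReal_prod' _ _ (fun m _ => bdKernel_nonneg hp hq _ _)]
  have hf0 : f 0 = (g 0 : ℤ) := hfg 0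
  rw [hf0]
  congr 1 <;> first | (split <;> simp) | rfl


include hp hq hpq in
lemma final_step (n : ℕ) (j : ℤ) (hjk : j ≤ (k : ℤ)) :
    ∑' l : Set.Iic (k:ℤ), Kk p q j l * ENNReal.ofReal (Useq p q k n l) =
      ENNReal.ofReal (Useq p q k (n+1) j) := by
  by_cases hj0 : 0 ≤ j
  · have Kp : Kk p q j (j+1) = ENNReal.ofReal (p j.toNat) := by
      unfold Kk bdKernel; rw [if_pos hj0, if_pos rfl]
    have Kq : Kk p q j (j-1) = ENNReal.ofReal (q j.toNat) := by
      unfold Kk bdKernel; rw [if_pos hj0, if_neg (by omega), if_pos rfl]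
    have K0 : ∀ b : ℤ, b ≠ j + 1 → b ≠ j - 1 → Kk p q j b = 0 := by
      intro b h1 h2
      unfold Kk bdKernel
      rw [if_pos hj0, if_neg h1, if_neg h2, ENNReal.ofReal_zero]
    rw [Useq_succ_def, if_pos hjk, if_pos hj0,
      ENNReal.ofReal_add (mul_nonneg (hp _).1.le (Useq_nonneg hp hq k n _))
        (mul_nonneg (hq _).1.le (Useq_nonneg hp hq k n _)),
      ENNReal.ofReal_mul (hp _).1.le, ENNReal.ofReal_mul (hq _).1.le]
    by_cases hjk1 : j + 1 ≤ (k : ℤ)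
    · have hne : (⟨j+1, Set.mem_Iic.2 hjk1⟩ : Set.Iic (k:ℤ)) ≠ ⟨j-1, Set.mem_Iic.2 (by omega)⟩ := by
        intro h
        have := congrArg Subtype.val h
        simp only at this
        omega
      rw [tsum_eq_sum (s := {(⟨j+1, Set.mem_Iic.2 hjk1⟩ : Set.Iic (k:ℤ)), ⟨j-1, Set.mem_Iic.2 (by omega)⟩})
        (fun l hl => ?_), Finset.sum_pair hne]
      · rw [Kp, Kq]
      · rw [K0 l ?h1 ?h2, zero_mul]
        case h1 =>
          intro hEq
          exact hl (by simp only [Finset.mem_insert]; left; exact Subtype.ext hEq)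
        case h2 =>
          intro hEq
          exact hl (by
            simp only [Finset.mem_insert, Finset.mem_singleton]
            right; exact Subtype.ext hEq)
    · -- here j = k so j+1 > k and Useq n (j+1) = 0
      have hU0 : Useq p q k n (j+1) = 0 := Useq_gt k n _ (by omega)
      rw [hU0, ENNReal.ofReal_zero, mul_zero, zero_add]
      rw [tsum_eq_single (⟨j-1, Set.mem_Iic.2 (by omega)⟩ : Set.Iic (k:ℤ)) (fun l hl => ?_)]
      · rw [Kq]
      · rw [K0 l ?h1 ?h2, zero_mul]
        case h1 =>
          intro hEq
          have := l.2
          simp only [Set.mem_Iic] at this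
          omega
        case h2 =>
          intro hEq
          exact hl (Subtype.ext hEq)
  · have K1 : Kk p q j j = 1 := by
      unfold Kk bdKernel
      rw [if_neg hj0, if_pos rfl, ENNReal.ofReal_one]
    have K0 : ∀ b : ℤ, b ≠ j → Kk p q j b = 0 := by
      intro b h1
      unfold Kk bdKernel
      rw [if_neg hj0, if_neg h1, ENNReal.ofReal_zero]
    rw [Useq_succ_def, if_pos hjk, if_neg hj0]
    rw [tsum_eq_single (⟨j, Set.mem_Iic.2 hjk⟩ : Set.Iic (k:ℤ)) (fun l hl => ?_)]
    · rw [K1, one_mul]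
    · rw [K0 l (fun hEq => hl (Subtype.ext hEq)), zero_mul]

-- the key combinatorial identity
include hp hq hpq in
lemma tsum_Wfun (n : ℕ) : ∀ j : ℤ,
    ∑' g : Fin (n+1) → Set.Iic (k:ℤ), Wfun p q k n j g = ENNReal.ofReal (Useq p q k n j) := by
  induction n with
  | zero =>
    intro j
    by_cases hjk : j ≤ (k : ℤ)
    · rw [tsum_eq_single (fun _ => (⟨j, Set.mem_Iic.2 hjk⟩ : Set.Iic (k:ℤ)))]
      · simp [Wfun, Useq, hjk]
      · intro g hg
        simp only [Wfun, Finset.univ_eq_empty, Finset.prod_empty, mul_one]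
        rw [if_neg]
        intro hEq
        apply hg
        funext m
        have : m = 0 := Fin.eq_zero m
        rw [this]
        exact Subtype.ext hEq
    · have hz : ∀ g : Fin (0+1) → Set.Iic (k:ℤ), Wfun p q k 0 j g = 0 := by
        intro g
        simp only [Wfun, Finset.univ_eq_empty, Finset.prod_empty, mul_one]
        rw [if_neg]
        intro hEq
        exact hjk (hEq ▸ (g 0).2)
      rw [ENNReal.summable.tsum_eq_zero_iff.2 hz]
      simp [Useq, if_neg hjk]
  | succ n ih =>
    intro j
    rw [← (Fin.consEquiv (fun _ : Fin (n+2) => (Set.Iic (k:ℤ)))).tsum_eq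
      (Wfun p q k (n+1) j), ENNReal.tsum_prod']
    have hsplit : ∀ (a : Set.Iic (k:ℤ)) (t : Fin (n+1) → Set.Iic (k:ℤ)),
        Wfun p q k (n+1) j (Fin.consEquiv _ (a, t)) =
          (if (a : ℤ) = j then 1 else 0) *
            (Kk p q a (t 0) * ∏ m : Fin n, Kk p q (t m.castSucc) (t m.succ)) := by
      intro a t
      simp only [Wfun, Fin.consEquiv_apply, Fin.cons_zero, Fin.prod_univ_succ,
        Fin.castSucc_zero, Fin.cons_succ, ← Fin.succ_castSucc]
      try ring
    have hinner : ∀ (a : Set.Iic (k:ℤ)) (t : Fin (n+1) → Set.Iic (k:ℤ)),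
        Kk p q a (t 0) * ∏ m : Fin n, Kk p q (t m.castSucc) (t m.succ) =
          ∑' l : Set.Iic (k:ℤ), Kk p q a l * Wfun p q k n l t := by
      intro a t
      rw [tsum_eq_single (t 0)]
      · simp [Wfun]
      · intro l hl
        have : ((t 0 : ℤ)) ≠ (l : ℤ) := fun h => hl (Subtype.ext h).symm
        simp [Wfun, if_neg this]
    have hmid : ∀ a : Set.Iic (k:ℤ),
        (∑' t : Fin (n+1) → Set.Iic (k:ℤ), Wfun p q k (n+1) j (Fin.consEquiv _ (a, t))) =
          (if (a : ℤ) = j then 1 else 0) *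
            ∑' l : Set.Iic (k:ℤ), Kk p q a l * ENNReal.ofReal (Useq p q k n l) := by
      intro a
      simp_rw [hsplit, hinner, ENNReal.tsum_mul_left]
      congr 1
      rw [ENNReal.tsum_comm]
      congr 1
      funext l
      rw [ENNReal.tsum_mul_left, ih]
    calc ∑' (a : Set.Iic (k:ℤ)) (t : Fin (n+1) → Set.Iic (k:ℤ)),
          Wfun p q k (n+1) j (Fin.consEquiv _ (a, t))
        = ∑' a : Set.Iic (k:ℤ), (if (a : ℤ) = j then 1 else 0) *
            ∑' l : Set.Iic (k:ℤ), Kk p q a l * ENNReal.ofReal (Useq p q k n l) := by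
          exact tsum_congr hmid
      _ = ENNReal.ofReal (Useq p q k (n+1) j) := by
          by_cases hjk : j ≤ (k : ℤ)
          · rw [tsum_eq_single (⟨j, Set.mem_Iic.2 hjk⟩ : Set.Iic (k:ℤ))]
            · rw [if_pos rfl, one_mul]
              exact final_step hp hq hpq k n j hjk
            · intro a ha
              rw [if_neg (fun h => ha (Subtype.ext h)), zero_mul]
          · rw [Useq_succ_def, if_neg hjk, ENNReal.ofReal_zero,
              ENNReal.summable.tsum_eq_zero_iff.2]
            intro a
            rw [if_neg (show ¬((a : ℤ) = j) from fun h => hjk (h ▸ a.2)), zero_mul]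

lemma cyl_measurable (n : ℕ) (g : Fin (n+1) → Set.Iic (k:ℤ)) : MeasurableSet (cyl k n g) := by
  have : cyl k n g = ⋂ m : Fin (n+1), (fun ω : ℕ → ℤ => ω m) ⁻¹' {(g m : ℤ)} := by
    ext ω; simp [cyl, Set.mem_iInter]
  rw [this]
  exact MeasurableSet.iInter fun m => measurable_pi_apply (m : ℕ) (measurableSet_singleton _)

lemma cyl_union (n : ℕ) :
    {ω : ℕ → ℤ | ∀ m ≤ n, ω m ≤ (k : ℤ)} = ⋃ g : Fin (n+1) → Set.Iic (k:ℤ), cyl k n g := by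
  ext ω
  constructor
  · intro hω
    refine Set.mem_iUnion.2 ⟨fun m => ⟨ω m, hω m (Nat.lt_succ_iff.1 m.isLt)⟩, fun m => rfl⟩
  · intro hω m hm
    obtain ⟨g, hg⟩ := Set.mem_iUnion.1 hω
    have := hg ⟨m, Nat.lt_succ_of_le hm⟩
    rw [this]
    exact (g ⟨m, Nat.lt_succ_of_le hm⟩).2

lemma cyl_disjoint (n : ℕ) : Pairwise (Function.onFun Disjoint (cyl k n)) := by
  intro g g' hne
  rw [Function.onFun, Set.disjoint_left]
  intro ω hg hg'
  apply hne
  funext m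
  exact Subtype.ext ((hg m).symm.trans (hg' m))

include hp hq hpq in
lemma measure_An (μ : ℤ → Measure (ℕ → ℤ)) (hlaw : IsBDLaw p q μ) (j : ℤ) (n : ℕ) :
    μ j {ω : ℕ → ℤ | ∀ m ≤ n, ω m ≤ (k : ℤ)} = ENNReal.ofReal (Useq p q k n j) := by
  rw [cyl_union k n, measure_iUnion (cyl_disjoint k n) (cyl_measurable k n)]
  rw [tsum_congr (fun g => measure_cyl hp hq k μ hlaw j n g)]
  exact tsum_Wfun hp hq hpq k n j

end B

theorem stmt0 (p q : ℕ → ℝ)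
    (hp : ∀ i, p i ∈ Set.Ioo (0 : ℝ) 1) (hq : ∀ i, q i ∈ Set.Ioo (0 : ℝ) 1)
    (hpq : ∀ i, p i + q i = 1)
    (μ : ℤ → Measure (ℕ → ℤ)) (hμ : ∀ i, IsProbabilityMeasure (μ i))
    (hlaw : IsBDLaw p q μ)
    (k : ℕ) (hk : 1 ≤ k) (i : ℕ) (hik : i ≤ k) :
    μ i {ω : ℕ → ℤ | ∀ n : ℕ, ω n ≤ (k : ℤ)} =
      ENNReal.ofReal ((∑ n ∈ Finset.Icc i k, cseq p q n) /
        (1 + ∑ n ∈ Finset.range (k + 1), cseq p q n)) := by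
  haveI := hμ (i : ℤ)
  set A : ℕ → Set (ℕ → ℤ) := fun n => {ω : ℕ → ℤ | ∀ m ≤ n, ω m ≤ (k : ℤ)} with hA
  have hInter : {ω : ℕ → ℤ | ∀ n : ℕ, ω n ≤ (k : ℤ)} = ⋂ n, A n := by
    ext ω
    simp only [Set.mem_iInter, Set.mem_setOf_eq, hA]
    exact ⟨fun h n m hm => h m, fun h n => h n n le_rfl⟩
  have hAmeas : ∀ n, MeasurableSet (A n) := by
    intro n
    have : A n = ⋂ m, ⋂ (_ : m ≤ n), (fun ω : ℕ → ℤ => ω m) ⁻¹' Set.Iic (k : ℤ) := by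
      ext ω; simp [hA, Set.mem_iInter]
    rw [this]
    exact MeasurableSet.iInter fun m => MeasurableSet.iInter fun _ =>
      measurable_pi_apply m (by trivial)
  have hAnti : Antitone A := by
    intro a b hab ω hω m hm
    exact hω m (hm.trans hab)
  have h1 : Tendsto (fun n => μ i (A n)) atTop (nhds (μ i (⋂ n, A n))) :=
    tendsto_measure_iInter_atTop (fun n => (hAmeas n).nullMeasurableSet) hAnti
      ⟨0, measure_ne_top _ _⟩
  have h2 : ∀ n, μ i (A n) = ENNReal.ofReal (Useq p q k n i) := fun n =>
    measure_An hp hq hpq k μ hlaw i n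
  simp only [h2] at h1
  have h3 : Tendsto (fun n => ENNReal.ofReal (Useq p q k n (i : ℤ))) atTop
      (nhds (ENNReal.ofReal (Ulim p q k i))) :=
    (ENNReal.continuous_ofReal.tendsto _).comp (Useq_tendsto hp hq hpq k i)
  rw [hInter, tendsto_nhds_unique h1 h3, Ulim_eq hp hq hpq k i hik]
end

section
/- If ∑_{n=0}^{∞} c_n = ∞ (i.e. the series diverges), then for every integer i ≥ 0, absorption is almost sure: μ_i({ω ∈ ℤ^ℕ : ∃ n ∈ ℕ, ω_n = −1}) = 1. -/
open MeasureTheory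

open Filter

namespace BDaux
open Classical in
noncomputable def extg (n : ℕ) (g : Fin (n+1) → ℤ) : ℕ → ℤ :=
  fun m => if h : m < n + 1 then g ⟨m, h⟩ else 0

lemma extg_fin (n : ℕ) (g : Fin (n+1) → ℤ) (m : Fin (n+1)) : extg n g m = g m := by
  simp [extg, m.isLt]

lemma extg_zero (n : ℕ) (g : Fin (n+1) → ℤ) : extg n g 0 = g 0 := extg_fin n g 0

lemma extg_cons_zero (n : ℕ) (x : ℤ) (h : Fin (n+1) → ℤ) :
    extg (n+1) (Fin.cons x h) 0 = x := by
  simpa using extg_fin (n+1) (Fin.cons x h) 0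

lemma extg_cons_succ (n : ℕ) (x : ℤ) (h : Fin (n+1) → ℤ) (m : ℕ) :
    extg (n+1) (Fin.cons x h) (m+1) = extg n h m := by
  unfold extg
  by_cases hm : m < n + 1
  · have hm1 : m + 1 < n + 2 := by omega
    simp only [dif_pos hm, dif_pos hm1]
    have : (⟨m+1, hm1⟩ : Fin (n+2)) = Fin.succ ⟨m, hm⟩ := rfl
    rw [this, Fin.cons_succ]
  · have hm1 : ¬ (m + 1 < n + 2) := by omega
    simp [dif_neg hm, dif_neg hm1, show ¬ m ≤ n by omega]

noncomputable def W (p q : ℕ → ℝ) (n : ℕ) (i : ℤ) (g : Fin (n+1) → ℤ) : ℝ :=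
  (if extg n g 0 = i then (1:ℝ) else 0) *
    ∏ m ∈ Finset.range n, bdKernel p q (extg n g m) (extg n g (m+1))

lemma bdKernel_nonneg {p q : ℕ → ℝ} (hp : ∀ i, p i ∈ Set.Ioo (0:ℝ) 1)
    (hq : ∀ i, q i ∈ Set.Ioo (0:ℝ) 1) (i j : ℤ) : 0 ≤ bdKernel p q i j := by
  unfold bdKernel
  split_ifs <;> first
    | exact le_of_lt (hp _).1
    | exact le_of_lt (hq _).1
    | norm_num

lemma W_nonneg {p q : ℕ → ℝ} (hp : ∀ i, p i ∈ Set.Ioo (0:ℝ) 1)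
    (hq : ∀ i, q i ∈ Set.Ioo (0:ℝ) 1) (n : ℕ) (i : ℤ) (g : Fin (n+1) → ℤ) :
    0 ≤ W p q n i g := by
  apply mul_nonneg
  · split_ifs <;> norm_num
  · exact Finset.prod_nonneg fun m _ => bdKernel_nonneg hp hq _ _

lemma W_eq_zero_of_ne {p q : ℕ → ℝ} {n : ℕ} {i : ℤ} {g : Fin (n+1) → ℤ}
    (h : g 0 ≠ i) : W p q n i g = 0 := by
  unfold W
  rw [extg_zero, if_neg h, zero_mul]

lemma W_cons (p q : ℕ → ℝ) (n : ℕ) (i x : ℤ) (h : Fin (n+1) → ℤ) :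
    W p q (n+1) i (Fin.cons x h) =
      (if x = i then (1:ℝ) else 0) * (bdKernel p q x (h 0) * W p q n (h 0) h) := by
  unfold W
  rw [Finset.prod_range_succ' (fun m => bdKernel p q (extg (n+1) (Fin.cons x h) m)
      (extg (n+1) (Fin.cons x h) (m+1))) n]
  simp only [extg_cons_zero, extg_cons_succ, extg_zero, Fin.cons_zero, if_pos rfl, if_true, one_mul]
  ring

section
variable {p q : ℕ → ℝ} {μ : ℤ → Measure (ℕ → ℤ)}

lemma cyl_eq (n : ℕ) (g : Fin (n+1) → ℤ) :
    {ω : ℕ → ℤ | ∀ m ≤ n, ω m = extg n g m} = {ω | ∀ m : Fin (n+1), ω m = g m} := by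
  ext ω
  simp only [Set.mem_setOf_eq]
  constructor
  · intro hω m
    rw [← extg_fin n g m]
    exact hω m (Nat.lt_succ_iff.mp m.isLt)
  · intro hω m hm
    have hlt : m < n + 1 := Nat.lt_succ_of_le hm
    have := hω ⟨m, hlt⟩
    simpa [extg, hlt] using this

lemma meas_cyl (hlaw : IsBDLaw p q μ) (i : ℤ) (n : ℕ) (g : Fin (n+1) → ℤ) :
    μ i {ω | ∀ m : Fin (n+1), ω m = g m} = ENNReal.ofReal (W p q n i g) := by
  rw [← cyl_eq]
  exact hlaw i n (extg n g)

lemma meas_set_cyl (n : ℕ) (g : Fin (n+1) → ℤ) :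
    MeasurableSet {ω : ℕ → ℤ | ∀ m : Fin (n+1), ω m = g m} := by
  have : {ω : ℕ → ℤ | ∀ m : Fin (n+1), ω m = g m}
      = ⋂ m : Fin (n+1), (fun ω : ℕ → ℤ => ω m) ⁻¹' {g m} := by
    ext; simp [Set.mem_iInter]
  rw [this]
  exact MeasurableSet.iInter fun m => (measurable_pi_apply (m:ℕ)) (measurableSet_singleton _)

lemma fdd (hlaw : IsBDLaw p q μ) (i : ℤ) (n : ℕ) (P : (Fin (n+1) → ℤ) → Prop)
    [DecidablePred P] :
    μ i {ω : ℕ → ℤ | P (fun m => ω m)} =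
      ∑' g : Fin (n+1) → ℤ, if P g then ENNReal.ofReal (W p q n i g) else 0 := by
  have hset : {ω : ℕ → ℤ | P (fun m => ω m)} =
      ⋃ g : Fin (n+1) → ℤ, if P g then {ω | ∀ m : Fin (n+1), ω m = g m} else ∅ := by
    ext ω
    simp only [Set.mem_setOf_eq, Set.mem_iUnion]
    constructor
    · intro hω
      exact ⟨fun m => ω m, by rw [if_pos hω]; exact fun m => rfl⟩
    · rintro ⟨g, hg⟩
      by_cases hP : P g
      · rw [if_pos hP] at hg
        have : (fun m : Fin (n+1) => ω m) = g := funext fun m => hg m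
        rwa [this]
      · rw [if_neg hP] at hg
        exact absurd hg (Set.notMem_empty ω)
  rw [hset, measure_iUnion ?_ ?_]
  · congr 1
    funext g
    by_cases hP : P g
    · rw [if_pos hP, if_pos hP, meas_cyl hlaw]
    · rw [if_neg hP, if_neg hP, measure_empty]
  · intro g g' hne
    dsimp [Function.onFun]
    by_cases hP : P g <;> by_cases hP' : P g' <;> simp [hP, hP']
    rw [Set.disjoint_left]
    intro ω hg hg'
    exact hne (funext fun m => ((hg m).symm.trans (hg' m)))
  · intro g
    by_cases hP : P g
    · rw [if_pos hP]; exact meas_set_cyl n g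
    · rw [if_neg hP]; exact MeasurableSet.empty


def hitSet (n : ℕ) : Set (ℕ → ℤ) := {ω : ℕ → ℤ | ∃ m ≤ n, ω m = -1}

lemma hitSet_eq (n : ℕ) :
    hitSet n = {ω : ℕ → ℤ | (fun g : Fin (n+1) → ℤ => ∃ m, g m = -1) (fun m => ω m)} := by
  ext ω
  simp only [hitSet, Set.mem_setOf_eq]
  constructor
  · rintro ⟨m, hm, h⟩
    exact ⟨⟨m, Nat.lt_succ_of_le hm⟩, h⟩
  · rintro ⟨m, h⟩
    exact ⟨m, Nat.lt_succ_iff.mp m.isLt, h⟩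

lemma meas_hitSet_zero (hlaw : IsBDLaw p q μ) (j : ℤ) (hj : 0 ≤ j) :
    μ j (hitSet 0) = 0 := by
  have hset : hitSet 0 = {ω : ℕ → ℤ | ∀ m ≤ 0, ω m = (fun _ => (-1:ℤ)) m} := by
    ext ω
    simp [hitSet, Nat.le_zero]
  rw [hset, hlaw j 0 (fun _ => -1)]
  have : (-1 : ℤ) ≠ j := by omega
  simp [this]

lemma meas_hitSet_neg_one (hμ : ∀ i, IsProbabilityMeasure (μ i))
    (hlaw : IsBDLaw p q μ) (n : ℕ) : μ (-1) (hitSet n) = 1 := by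
  haveI := hμ (-1)
  have h1 : μ (-1) {ω : ℕ → ℤ | ∀ m ≤ 0, ω m = (fun _ => (-1:ℤ)) m} = 1 := by
    rw [hlaw (-1) 0 (fun _ => -1)]
    simp
  have hsub : {ω : ℕ → ℤ | ∀ m ≤ 0, ω m = (fun _ => (-1:ℤ)) m} ⊆ hitSet n :=
    fun ω hω => ⟨0, Nat.zero_le n, hω 0 le_rfl⟩
  have hge := measure_mono hsub (μ := μ (-1))
  rw [h1] at hge
  exact le_antisymm prob_le_one hge

lemma step (hp : ∀ i, p i ∈ Set.Ioo (0:ℝ) 1) (hq : ∀ i, q i ∈ Set.Ioo (0:ℝ) 1)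
    (hlaw : IsBDLaw p q μ) (j : ℤ) (hj : 0 ≤ j) (n : ℕ) :
    μ j (hitSet (n+1)) =
      ENNReal.ofReal (p j.toNat) * μ (j+1) (hitSet n)
        + ENNReal.ofReal (q j.toNat) * μ (j-1) (hitSet n) := by
  rw [hitSet_eq (n+1), fdd hlaw j (n+1) (fun g => ∃ m, g m = -1),
      hitSet_eq n, fdd hlaw (j+1) n (fun g => ∃ m, g m = -1),
      fdd hlaw (j-1) n (fun g => ∃ m, g m = -1)]
  have reindex : ∀ F : (Fin (n+2) → ℤ) → ENNReal,
      ∑' g, F g = ∑' (x : ℤ) (h : Fin (n+1) → ℤ), F (Fin.cons x h) := by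
    intro F
    calc ∑' g, F g = ∑' y : ℤ × (Fin (n+1) → ℤ), F (Fin.cons y.1 y.2) := by
          rw [← (Fin.consEquiv (fun _ : Fin (n+2) => ℤ)).tsum_eq F]
          exact tsum_congr fun y => by rcases y with ⟨x, h⟩; rfl
      _ = _ := ENNReal.tsum_prod (f := fun a b => F (Fin.cons a b))
  rw [reindex]
  have hzero : ∀ x : ℤ, x ≠ j →
      (∑' h : Fin (n+1) → ℤ, if (∃ m : Fin (n+2), (Fin.cons x h : Fin (n+2) → ℤ) m = -1)
          then ENNReal.ofReal (W p q (n+1) j (Fin.cons x h)) else 0) = 0 := by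
    intro x hx
    have hz : ∀ h : Fin (n+1) → ℤ,
        (if (∃ m : Fin (n+2), (Fin.cons x h : Fin (n+2) → ℤ) m = -1)
          then ENNReal.ofReal (W p q (n+1) j (Fin.cons x h)) else 0) = 0 := by
      intro h
      rw [W_eq_zero_of_ne (by simpa using hx), ENNReal.ofReal_zero, ite_self]
    rw [tsum_congr hz, tsum_zero]
  refine (tsum_eq_single j hzero).trans ?_
  have hterm : ∀ h : Fin (n+1) → ℤ,
      (if (∃ m : Fin (n+2), (Fin.cons j h : Fin (n+2) → ℤ) m = -1)
        then ENNReal.ofReal (W p q (n+1) j (Fin.cons j h)) else 0)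
      = ENNReal.ofReal (p j.toNat) *
          (if (∃ m : Fin (n+1), h m = -1) then ENNReal.ofReal (W p q n (j+1) h) else 0)
        + ENNReal.ofReal (q j.toNat) *
          (if (∃ m : Fin (n+1), h m = -1) then ENNReal.ofReal (W p q n (j-1) h) else 0) := by
    intro h
    have hex : (∃ m : Fin (n+2), (Fin.cons j h : Fin (n+2) → ℤ) m = -1) ↔ (∃ m : Fin (n+1), h m = -1) := by
      rw [Fin.exists_fin_succ]
      simp only [Fin.cons_zero, Fin.cons_succ]
      constructor
      · rintro (hj0 | hm)
        · omega
        · exact hm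
      · exact Or.inr
    rw [W_cons, if_pos rfl, one_mul]
    by_cases hh : ∃ m : Fin (n+1), h m = -1
    · rw [if_pos (hex.mpr hh), if_pos hh, if_pos hh]
      have hker : bdKernel p q j (h 0) =
          (if h 0 = j + 1 then p j.toNat else if h 0 = j - 1 then q j.toNat else 0) := by
        unfold bdKernel
        rw [if_pos hj]
      by_cases h1 : h 0 = j + 1
      · have h2 : W p q n (j-1) h = 0 := W_eq_zero_of_ne (by omega)
        rw [h2, ENNReal.ofReal_zero, mul_zero, add_zero, hker, if_pos h1]
        rw [ENNReal.ofReal_mul (le_of_lt (hp _).1)]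
        rw [h1]
      · by_cases h2 : h 0 = j - 1
        · have h3 : W p q n (j+1) h = 0 := W_eq_zero_of_ne (by omega)
          rw [h3, ENNReal.ofReal_zero, mul_zero, zero_add, hker, if_neg h1, if_pos h2]
          rw [ENNReal.ofReal_mul (le_of_lt (hq _).1)]
          rw [h2]
        · have h3 : W p q n (j+1) h = 0 := W_eq_zero_of_ne h1
          have h4 : W p q n (j-1) h = 0 := W_eq_zero_of_ne h2
          rw [h3, h4, hker, if_neg h1, if_neg h2]
          simp
    · rw [if_neg (fun c => hh (hex.mp c)), if_neg hh, if_neg hh]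
      simp
  refine (tsum_congr hterm).trans ?_
  rw [ENNReal.tsum_add, ENNReal.tsum_mul_left, ENNReal.tsum_mul_left]

lemma measurableSet_hitSet (n : ℕ) : MeasurableSet (hitSet n) := by
  have : hitSet n = ⋃ m : ℕ, ⋃ (_ : m ≤ n), (fun ω : ℕ → ℤ => ω m) ⁻¹' {-1} := by
    ext ω
    simp [hitSet]
  rw [this]
  exact MeasurableSet.iUnion fun m => MeasurableSet.iUnion fun _ =>
    (measurable_pi_apply m) (measurableSet_singleton _)

lemma hitSet_mono : Monotone hitSet := by
  intro a b hab ω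
  rintro ⟨m, hm, h⟩
  exact ⟨m, le_trans hm hab, h⟩

end
end BDaux

open Filter BDaux in
theorem stmt2 (p q : ℕ → ℝ)
    (hp : ∀ i, p i ∈ Set.Ioo (0 : ℝ) 1) (hq : ∀ i, q i ∈ Set.Ioo (0 : ℝ) 1)
    (hpq : ∀ i, p i + q i = 1)
    (μ : ℤ → Measure (ℕ → ℤ)) (hμ : ∀ i, IsProbabilityMeasure (μ i))
    (hlaw : IsBDLaw p q μ)
    (hc : ¬ Summable (cseq p q)) :
    ∀ i : ℕ, μ i {ω : ℕ → ℤ | ∃ n : ℕ, ω n = -1} = 1 := by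
  classical
  set A : Set (ℕ → ℤ) := {ω : ℕ → ℤ | ∃ n : ℕ, ω n = -1} with hA
  have hAUnion : A = ⋃ n, hitSet n := by
    ext ω
    simp only [hA, Set.mem_setOf_eq, Set.mem_iUnion, hitSet]
    constructor
    · rintro ⟨n, hn⟩; exact ⟨n, n, le_rfl, hn⟩
    · rintro ⟨n, m, _, hm⟩; exact ⟨m, hm⟩
  have hfin : ∀ (j : ℤ) (s : Set (ℕ → ℤ)), μ j s ≠ ⊤ := by
    intro j s
    haveI := hμ j
    exact measure_ne_top (μ j) s
  set a : ℕ → ℤ → ℝ := fun n j => (μ j (hitSet n)).toReal with ha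
  set u : ℤ → ℝ := fun j => (μ j A).toReal with hu
  have htend : ∀ j, Tendsto (fun n => a n j) atTop (nhds (u j)) := by
    intro j
    have h1 := tendsto_measure_iUnion_atTop (μ := μ j) hitSet_mono
    rw [← hAUnion] at h1
    exact (ENNReal.tendsto_toReal (hfin j A)).comp h1
  have harec : ∀ (j : ℤ), 0 ≤ j → ∀ n,
      a (n+1) j = p j.toNat * a n (j+1) + q j.toNat * a n (j-1) := by
    intro j hj n
    have hstep := step hp hq hlaw j hj n
    simp only [ha]
    rw [hstep, ENNReal.toReal_add (ENNReal.mul_ne_top ENNReal.ofReal_ne_top (hfin _ _))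
        (ENNReal.mul_ne_top ENNReal.ofReal_ne_top (hfin _ _)),
      ENNReal.toReal_mul, ENNReal.toReal_mul,
      ENNReal.toReal_ofReal (le_of_lt (hp _).1), ENNReal.toReal_ofReal (le_of_lt (hq _).1)]
  have hurec : ∀ (j : ℤ), 0 ≤ j → u j = p j.toNat * u (j+1) + q j.toNat * u (j-1) := by
    intro j hj
    have h1 : Tendsto (fun n => a (n+1) j) atTop (nhds (u j)) :=
      (htend j).comp (tendsto_add_atTop_nat 1)
    have h2 : Tendsto (fun n => p j.toNat * a n (j+1) + q j.toNat * a n (j-1)) atTop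
        (nhds (p j.toNat * u (j+1) + q j.toNat * u (j-1))) :=
      (((htend (j+1)).const_mul _).add ((htend (j-1)).const_mul _))
    have h3 : (fun n => a (n+1) j) = fun n => p j.toNat * a n (j+1) + q j.toNat * a n (j-1) :=
      funext (harec j hj)
    rw [h3] at h1
    exact tendsto_nhds_unique h1 h2
  have hneg : u (-1) = 1 := by
    have hm1 : μ (-1) A = 1 := by
      haveI := hμ (-1)
      refine le_antisymm prob_le_one ?_
      rw [hAUnion]
      calc (1:ENNReal) = μ (-1) (hitSet 0) := (meas_hitSet_neg_one hμ hlaw 0).symm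
        _ ≤ _ := measure_mono (Set.subset_iUnion _ 0)
    simp [hu, hm1]
  have hub : ∀ j, u j ≤ 1 := by
    intro j
    haveI := hμ j
    have := ENNReal.toReal_mono (by simp) (prob_le_one (μ := μ j) (s := A))
    simpa using this
  have hunn : ∀ j, 0 ≤ u j := fun j => ENNReal.toReal_nonneg
  -- shifted survival probabilities
  set vv : ℕ → ℝ := fun k => 1 - u ((k:ℤ) - 1) with hvvdef
  have hvv0 : vv 0 = 0 := by simp [hvvdef, hneg]
  have hvrec : ∀ k : ℕ, vv (k+1) = p k * vv (k+2) + q k * vv k := by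
    intro k
    have h1 := hurec (k:ℤ) (by positivity)
    rw [Int.toNat_natCast] at h1
    have e1 : ((k+1:ℕ):ℤ) - 1 = (k:ℤ) := by push_cast; ring
    have e2 : ((k+2:ℕ):ℤ) - 1 = (k:ℤ) + 1 := by push_cast; ring
    simp only [hvvdef, e1, e2]
    rw [h1]
    have := hpq k
    ring_nf
    nlinarith [hpq k]
  set d : ℕ → ℝ := fun k => vv (k+1) - vv k with hddef
  have hd : ∀ k, p k * d (k+1) = q k * d k := by
    intro k
    have h1 := hvrec k
    simp only [hddef]
    linear_combination (-1 : ℝ) * h1 - vv (k+1) * hpq k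
  have hdrec : ∀ k, d (k+1) = q k / p k * d k := by
    intro k
    have hpk : p k ≠ 0 := ne_of_gt (hp k).1
    field_simp
    linear_combination hd k
  have hdk : ∀ k, d (k+1) = cseq p q k * d 0 := by
    intro k
    induction k with
    | zero =>
      rw [hdrec 0]
      simp [cseq]
    | succ k ih =>
      rw [hdrec (k+1), ih]
      have : cseq p q (k+1) = cseq p q k * (q (k+1) / p (k+1)) := by
        simp only [cseq]
        rw [Finset.prod_range_succ]
      rw [this]
      ring
  have htele : ∀ N, vv (N+1) = (1 + ∑ k ∈ Finset.range N, cseq p q k) * d 0 := by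
    intro N
    induction N with
    | zero =>
      simp only [Finset.range_zero, Finset.sum_empty, add_zero, one_mul, hddef]
      rw [hvv0]
      ring
    | succ N ih =>
      have : vv (N+2) = vv (N+1) + d (N+1) := by simp [hddef]
      rw [this, ih, hdk N, Finset.sum_range_succ]
      ring
  have hvvle : ∀ k, vv k ≤ 1 := by
    intro k
    simp only [hvvdef]
    have := hunn ((k:ℤ) - 1)
    linarith
  have hd0nn : 0 ≤ d 0 := by
    have h0 : d 0 = 1 - u 0 := by
      simp only [hddef, hvvdef]
      norm_num [hneg]
    rw [h0]
    linarith [hub 0]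
  have hcnn : ∀ k, 0 ≤ cseq p q k := by
    intro k
    exact Finset.prod_nonneg fun j _ => div_nonneg (le_of_lt (hq j).1) (le_of_lt (hp j).1)
  have htop : Tendsto (fun N => ∑ k ∈ Finset.range N, cseq p q k) atTop atTop :=
    (not_summable_iff_tendsto_nat_atTop_of_nonneg hcnn).mp hc
  have hd0 : d 0 = 0 := by
    by_contra hne
    have hpos : 0 < d 0 := lt_of_le_of_ne hd0nn (Ne.symm hne)
    obtain ⟨N, hN⟩ := (htop.eventually_ge_atTop (1 / d 0)).exists
    have := htele N
    have := hvvle (N+1)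
    have h1d : 1 / d 0 * d 0 = 1 := by field_simp
    have hS := mul_le_mul_of_nonneg_right hN (le_of_lt hpos)
    rw [h1d] at hS
    nlinarith
  have huone : ∀ k : ℕ, u (k:ℤ) = 1 := by
    intro k
    have h1 := htele k
    rw [hd0, mul_zero] at h1
    have e1 : ((k+1:ℕ):ℤ) - 1 = (k:ℤ) := by push_cast; ring
    simp only [hvvdef, e1] at h1
    linarith
  intro i
  haveI := hμ i
  have := huone i
  rw [hu] at this
  exact (ENNReal.toReal_eq_one_iff _).mp this
end

section
/- If the series ∑_{n=0}^{∞} c_n converges, then for every integer i ≥ 0 the probability of eventual absorption is μ_i({ω ∈ ℤ^ℕ : ∃ n ∈ ℕ, ω_n = −1}) = (∑_{n=i}^{∞} c_n) / (1 + ∑_{n=0}^{∞} c_n); in particular absorption is transient, i.e. this probability is strictly less than 1. -/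
open MeasureTheory

namespace BDProof

variable {p q : ℕ → ℝ}

section Analysis

variable (hp : ∀ i, p i ∈ Set.Ioo (0 : ℝ) 1) (hq : ∀ i, q i ∈ Set.Ioo (0 : ℝ) 1)
  (hpq : ∀ i, p i + q i = 1) (hc : Summable (cseq p q))

include hp hq in
lemma cseq_pos (n : ℕ) : 0 < cseq p q n :=
  Finset.prod_pos fun j _ => div_pos (hq j).1 (hp j).1

lemma cseq_succ (n : ℕ) : cseq p q (n + 1) = cseq p q n * (q (n + 1) / p (n + 1)) :=
  Finset.prod_range_succ _ _

/-- tail sum -/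
noncomputable def T (p q : ℕ → ℝ) (k : ℕ) : ℝ := ∑' n : ℕ, cseq p q (n + k)

include hc in
lemma summable_tail (k : ℕ) : Summable fun n => cseq p q (n + k) :=
  (summable_nat_add_iff k).2 hc

include hp hq hc in
lemma T_nonneg (k : ℕ) : 0 ≤ T p q k :=
  tsum_nonneg fun n => (cseq_pos hp hq _).le

include hc in
lemma sum_add_T (k : ℕ) : ∑ n ∈ Finset.range k, cseq p q n + T p q k = T p q 0 := by
  unfold T
  simpa using Summable.sum_add_tsum_nat_add k hc

include hp hq hc in
lemma T_le (k : ℕ) : T p q k ≤ T p q 0 := by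
  have := sum_add_T (p := p) (q := q) hc k
  have h2 : 0 ≤ ∑ n ∈ Finset.range k, cseq p q n :=
    Finset.sum_nonneg fun n _ => (cseq_pos hp hq n).le
  linarith

include hc in
lemma T_succ (k : ℕ) : T p q k = cseq p q k + T p q (k + 1) := by
  have h1 : T p q k = cseq p q (0 + k) + ∑' n : ℕ, cseq p q (n + 1 + k) :=
    Summable.tsum_eq_zero_add (summable_tail hc k)
  have h2 : (fun n : ℕ => cseq p q (n + 1 + k)) = fun n : ℕ => cseq p q (n + (k + 1)) := by
    funext n; ring_nf
  rw [h1, h2]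
  simp [T]

include hc in
lemma T_tendsto : Filter.Tendsto (T p q) Filter.atTop (nhds 0) := by
  have h1 : Filter.Tendsto (fun k => ∑ n ∈ Finset.range k, cseq p q n) Filter.atTop
      (nhds (T p q 0)) := by
    have h := hc.hasSum.tendsto_sum_nat
    have : T p q 0 = ∑' n, cseq p q n := by simp [T]
    rw [this]; exact h
  have h2 : (T p q) = fun k => T p q 0 - ∑ n ∈ Finset.range k, cseq p q n := by
    funext k; have := sum_add_T (p := p) (q := q) hc k; linarith
  rw [h2]
  have := (tendsto_const_nhds (x := T p q 0)).sub h1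
  simpa using this

/-- target harmonic function -/
noncomputable def hfun (p q : ℕ → ℝ) (i : ℤ) : ℝ :=
  if 0 ≤ i then T p q i.toNat / (1 + T p q 0) else if i = -1 then 1 else 0

include hp hq hc in
lemma one_add_T_pos : 0 < 1 + T p q 0 := by linarith [T_nonneg hp hq hc 0]

include hp hq hc in
lemma hfun_nonneg (i : ℤ) : 0 ≤ hfun p q i := by
  unfold hfun
  split
  · exact div_nonneg (T_nonneg hp hq hc _) (one_add_T_pos hp hq hc).le
  · split <;> norm_num

include hp hq hc in
lemma hfun_le_one (i : ℤ) : hfun p q i ≤ 1 := by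
  unfold hfun
  split
  · rw [div_le_one (one_add_T_pos hp hq hc)]
    linarith [T_le hp hq hc i.toNat]
  · split <;> norm_num

include hp hq hpq hc in
lemma pq_cseq (n : ℕ) : p (n + 1) * cseq p q (n + 1) = q (n + 1) * cseq p q n := by
  rw [cseq_succ, mul_comm (cseq p q n) _, ← mul_assoc,
    mul_comm (p (n+1)) _, div_mul_cancel₀ _ (hp (n+1)).1.ne']

include hp hq hpq hc in
lemma hfun_harmonic (i : ℤ) (hi : 0 ≤ i) :
    p i.toNat * hfun p q (i + 1) + q i.toNat * hfun p q (i - 1) = hfun p q i := by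
  have hD := one_add_T_pos hp hq hc
  lift i to ℕ using hi with k
  have hD' := hD.ne'
  cases k with
  | zero =>
    have hc0 : p 0 * cseq p q 0 = q 0 := by
      have h00 : cseq p q 0 = q 0 / p 0 := by simp [cseq]
      rw [h00, mul_div_cancel₀ _ (hp 0).1.ne']
    have hT0 : T p q 0 = cseq p q 0 + T p q 1 := T_succ hc 0
    have key : p 0 * T p q 1 + q 0 * (1 + T p q 0) = T p q 0 := by
      linear_combination (q 0 - 1) * hT0 + (T p q 1 + cseq p q 0) * hpq 0 - hc0
    have e1 : ((0 : ℕ) : ℤ) + 1 = 1 := by norm_num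
    have e2 : ((0 : ℕ) : ℤ) - 1 = -1 := by norm_num
    rw [e1, e2]
    simp only [hfun]
    norm_num
    field_simp
    linear_combination key
  | succ j =>
    have hTj : T p q j = cseq p q j + T p q (j + 1) := T_succ hc j
    have hTj1 : T p q (j + 1) = cseq p q (j + 1) + T p q (j + 2) := T_succ hc (j + 1)
    have hpqc := pq_cseq hp hq hpq hc j
    have key : p (j + 1) * T p q (j + 2) + q (j + 1) * T p q j = T p q (j + 1) := by
      linear_combination q (j + 1) * hTj - p (j + 1) * hTj1
        + T p q (j + 1) * hpq (j + 1) - hpqc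
    have e1 : ((j + 1 : ℕ) : ℤ) + 1 = ((j + 2 : ℕ) : ℤ) := by push_cast; ring
    have e2 : ((j + 1 : ℕ) : ℤ) - 1 = ((j : ℕ) : ℤ) := by push_cast; ring
    rw [e1, e2]
    simp only [hfun, Int.toNat_natCast, Int.natCast_nonneg, if_true]
    field_simp
    linear_combination key

/-- absorption probability approximants -/
noncomputable def aseq (p q : ℕ → ℝ) : ℕ → ℤ → ℝ
  | 0, i => if i = -1 then 1 else 0
  | (N + 1), i =>
      if 0 ≤ i then p i.toNat * aseq p q N (i + 1) + q i.toNat * aseq p q N (i - 1)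
      else aseq p q N i

lemma aseq_zero (i : ℤ) : aseq p q 0 i = if i = -1 then 1 else 0 := rfl

lemma aseq_succ (N : ℕ) (i : ℤ) :
    aseq p q (N + 1) i =
      if 0 ≤ i then p i.toNat * aseq p q N (i + 1) + q i.toNat * aseq p q N (i - 1)
      else aseq p q N i := rfl

lemma aseq_neg (N : ℕ) (i : ℤ) (hi : i < 0) : aseq p q N i = if i = -1 then 1 else 0 := by
  induction N with
  | zero => rfl
  | succ N ih => rw [aseq_succ, if_neg (by omega)]; exact ih

include hp hq in
lemma aseq_nonneg (N : ℕ) (i : ℤ) : 0 ≤ aseq p q N i := by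
  induction N generalizing i with
  | zero => rw [aseq_zero]; split <;> norm_num
  | succ N ih =>
    rw [aseq_succ]
    split
    · have := (hp i.toNat).1.le
      have := (hq i.toNat).1.le
      have := ih (i + 1)
      have := ih (i - 1)
      positivity
    · exact ih i

include hp hq in
lemma aseq_mono (N : ℕ) (i : ℤ) : aseq p q N i ≤ aseq p q (N + 1) i := by
  induction N generalizing i with
  | zero =>
    rw [aseq_succ]
    by_cases hi : 0 ≤ i
    · rw [if_pos hi, aseq_zero, if_neg (show ¬ i = -1 by omega)]
      have h1 := (hp i.toNat).1.le
      have h2 := (hq i.toNat).1.le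
      have h3 := aseq_nonneg hp hq 0 (i + 1)
      have h4 := aseq_nonneg hp hq 0 (i - 1)
      positivity
    · rw [if_neg hi]
  | succ N ih =>
    rw [aseq_succ, aseq_succ]
    split
    · have h1 := ih (i + 1)
      have h2 := ih (i - 1)
      have := (hp i.toNat).1.le
      have := (hq i.toNat).1.le
      nlinarith
    · exact ih i

include hp hq hpq hc in
lemma aseq_le_hfun (N : ℕ) (i : ℤ) : aseq p q N i ≤ hfun p q i := by
  induction N generalizing i with
  | zero =>
    rw [aseq_zero]
    split
    · subst_eqs
      unfold hfun
      norm_num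
    · exact hfun_nonneg hp hq hc i
  | succ N ih =>
    rw [aseq_succ]
    split
    · rename_i hi
      rw [← hfun_harmonic hp hq hpq hc i hi]
      have h1 := ih (i + 1)
      have h2 := ih (i - 1)
      have := (hp i.toNat).1.le
      have := (hq i.toNat).1.le
      nlinarith
    · exact ih i

/-- limiting absorption probability -/
noncomputable def alim (p q : ℕ → ℝ) (i : ℤ) : ℝ := ⨆ N, aseq p q N i

include hp hq hpq hc in
lemma aseq_bdd (i : ℤ) : BddAbove (Set.range fun N => aseq p q N i) := by
  refine ⟨hfun p q i, ?_⟩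
  rintro x ⟨N, rfl⟩
  exact aseq_le_hfun hp hq hpq hc N i

include hp hq hpq hc in
lemma tendsto_aseq (i : ℤ) :
    Filter.Tendsto (fun N => aseq p q N i) Filter.atTop (nhds (alim p q i)) :=
  tendsto_atTop_ciSup (monotone_nat_of_le_succ fun N => aseq_mono hp hq N i)
    (aseq_bdd hp hq hpq hc i)

include hp hq hpq hc in
lemma alim_nonneg (i : ℤ) : 0 ≤ alim p q i :=
  le_trans (aseq_nonneg hp hq 0 i) (le_ciSup (aseq_bdd hp hq hpq hc i) 0)

include hp hq hpq hc in
lemma alim_le_hfun (i : ℤ) : alim p q i ≤ hfun p q i :=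
  ciSup_le fun N => aseq_le_hfun hp hq hpq hc N i

include hp hq hpq hc in
lemma alim_neg_one : alim p q (-1) = 1 := by
  have : ∀ N, aseq p q N (-1) = 1 := fun N => by
    rw [aseq_neg N (-1) (by norm_num), if_pos rfl]
  unfold alim
  simp [this]

include hp hq hpq hc in
lemma alim_harmonic (i : ℤ) (hi : 0 ≤ i) :
    p i.toNat * alim p q (i + 1) + q i.toNat * alim p q (i - 1) = alim p q i := by
  have h1 : Filter.Tendsto (fun N => aseq p q (N + 1) i) Filter.atTop (nhds (alim p q i)) :=
    (tendsto_aseq hp hq hpq hc i).comp (Filter.tendsto_add_atTop_nat 1)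
  have h2 : Filter.Tendsto
      (fun N => p i.toNat * aseq p q N (i + 1) + q i.toNat * aseq p q N (i - 1))
      Filter.atTop
      (nhds (p i.toNat * alim p q (i + 1) + q i.toNat * alim p q (i - 1))) :=
    ((tendsto_aseq hp hq hpq hc (i + 1)).const_mul _).add
      ((tendsto_aseq hp hq hpq hc (i - 1)).const_mul _)
  have heq : (fun N => aseq p q (N + 1) i)
      = fun N => p i.toNat * aseq p q N (i + 1) + q i.toNat * aseq p q N (i - 1) := by
    funext N; rw [aseq_succ, if_pos hi]
  rw [heq] at h1
  exact tendsto_nhds_unique h2 h1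

include hp hq hpq hc in
lemma alim_diff (k : ℕ) :
    alim p q (k + 1) - alim p q k = (alim p q 0 - 1) * cseq p q k := by
  induction k with
  | zero =>
    have hh := alim_harmonic hp hq hpq hc 0 le_rfl
    norm_num at hh
    have hm1 := alim_neg_one hp hq hpq hc
    rw [hm1] at hh
    have hc0 : cseq p q 0 = q 0 / p 0 := by simp [cseq]
    have hp0 := (hp 0).1.ne'
    have key : p 0 * (alim p q 1 - alim p q 0) = q 0 * (alim p q 0 - 1) := by
      linear_combination hh - alim p q 0 * hpq 0
    norm_num
    rw [hc0]
    field_simp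
    linear_combination key
  | succ k ih =>
    have hh := alim_harmonic hp hq hpq hc (k + 1) (by positivity)
    have e1 : ((k : ℤ) + 1).toNat = k + 1 := by omega
    have e2 : ((k : ℤ) + 1 + 1) = ((k + 1 : ℕ) : ℤ) + 1 := by push_cast; ring
    have e3 : ((k : ℤ) + 1 - 1) = ((k : ℕ) : ℤ) := by push_cast; ring
    rw [e1, e2, e3] at hh
    have hpk := (hp (k + 1)).1.ne'
    have hcs : cseq p q (k + 1) = cseq p q k * (q (k + 1) / p (k + 1)) := cseq_succ k
    have key : p (k + 1) * (alim p q ((k : ℤ) + 1 + 1) - alim p q ((k : ℤ) + 1))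
        = q (k + 1) * (alim p q ((k : ℤ) + 1) - alim p q (k : ℤ)) := by
      push_cast at hh
      linear_combination hh - alim p q ((k : ℤ) + 1) * hpq (k + 1)
    rw [hcs]
    push_cast
    field_simp
    linear_combination key + q (k + 1) * ih
include hp hq hpq hc in
lemma alim_telescope (M : ℕ) :
    alim p q M = 1 + (alim p q 0 - 1) * (1 + ∑ k ∈ Finset.range M, cseq p q k) := by
  induction M with
  | zero =>
    norm_num
  | succ M ih =>
    have hd := alim_diff hp hq hpq hc M
    rw [Finset.sum_range_succ]
    push_cast
    linear_combination ih + hd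

include hp hq hpq hc in
lemma alim_tendsto_zero :
    Filter.Tendsto (fun M : ℕ => alim p q M) Filter.atTop (nhds 0) := by
  apply squeeze_zero (fun M => alim_nonneg hp hq hpq hc _)
    (g := fun M => T p q M / (1 + T p q 0))
  · intro M
    have h1 := alim_le_hfun hp hq hpq hc (M : ℤ)
    have h2 : hfun p q (M : ℤ) = T p q M / (1 + T p q 0) := by
      simp [hfun]
    linarith
  · simpa using (T_tendsto hc).div_const (1 + T p q 0)

include hc in
lemma partial_tendsto :
    Filter.Tendsto (fun M : ℕ => ∑ k ∈ Finset.range M, cseq p q k) Filter.atTop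
      (nhds (T p q 0)) := by
  have h := hc.hasSum.tendsto_sum_nat
  have : T p q 0 = ∑' n, cseq p q n := by simp [T]
  rw [this]; exact h

include hp hq hpq hc in
lemma alim_zero_val : alim p q 0 - 1 = -(1 / (1 + T p q 0)) := by
  have hD := one_add_T_pos hp hq hc
  have h1 : Filter.Tendsto
      (fun M : ℕ => 1 + (alim p q 0 - 1) * (1 + ∑ k ∈ Finset.range M, cseq p q k))
      Filter.atTop (nhds (1 + (alim p q 0 - 1) * (1 + T p q 0))) :=
    Filter.Tendsto.const_add _ (Filter.Tendsto.const_mul _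
      (Filter.Tendsto.const_add _ (partial_tendsto hc)))
  have h2 := alim_tendsto_zero hp hq hpq hc
  have h3 : (fun M : ℕ => alim p q M)
      = fun M : ℕ => 1 + (alim p q 0 - 1) * (1 + ∑ k ∈ Finset.range M, cseq p q k) :=
    funext fun M => alim_telescope hp hq hpq hc M
  rw [h3] at h2
  have h4 := tendsto_nhds_unique h2 h1
  have hD' := hD.ne'
  field_simp
  linear_combination (-(1:ℝ)) * h4

include hp hq hpq hc in
lemma alim_val (i : ℕ) : alim p q i = T p q i / (1 + T p q 0) := by
  have hD := one_add_T_pos hp hq hc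
  have ht := alim_telescope hp hq hpq hc i
  have hz := alim_zero_val hp hq hpq hc
  have hs := sum_add_T hc i
  rw [ht, hz]
  have hD' := hD.ne'
  field_simp
  linear_combination -hs

end Analysis

section Comb

variable (p q : ℕ → ℝ)

/-- weight of a path -/
noncomputable def W (i : ℤ) (n : ℕ) (f : ℕ → ℤ) : ℝ :=
  (if f 0 = i then (1 : ℝ) else 0) * ∏ m ∈ Finset.range n, bdKernel p q (f m) (f (m + 1))

/-- extend a finite path by zero -/
def ext (n : ℕ) (v : Fin (n + 1) → ℤ) : ℕ → ℤ :=
  fun m => if h : m < n + 1 then v ⟨m, h⟩ else 0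

variable {p q}

variable (hp : ∀ i, p i ∈ Set.Ioo (0 : ℝ) 1) (hq : ∀ i, q i ∈ Set.Ioo (0 : ℝ) 1)

include hp hq in
lemma bdKernel_nonneg (i j : ℤ) : 0 ≤ bdKernel p q i j := by
  unfold bdKernel
  split
  · split
    · exact (hp _).1.le
    · split
      · exact (hq _).1.le
      · exact le_refl 0
  · split <;> norm_num

include hp hq in
lemma R_nonneg (n : ℕ) (f : ℕ → ℤ) :
    0 ≤ ∏ m ∈ Finset.range n, bdKernel p q (f m) (f (m + 1)) :=
  Finset.prod_nonneg fun m _ => bdKernel_nonneg hp hq _ _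

lemma ext_apply (n : ℕ) (v : Fin (n + 1) → ℤ) (m : ℕ) (hm : m < n + 1) :
    ext n v m = v ⟨m, hm⟩ := dif_pos hm

lemma ext_cons_zero (N : ℕ) (j : ℤ) (u : Fin (N + 1) → ℤ) :
    ext (N + 1) (Fin.cons j u) 0 = j := by
  rw [ext_apply (N + 1) _ 0 (by omega)]
  exact Fin.cons_zero _ _

lemma ext_cons_succ (N : ℕ) (j : ℤ) (u : Fin (N + 1) → ℤ) (m : ℕ) (hm : m < N + 1) :
    ext (N + 1) (Fin.cons j u) (m + 1) = ext N u m := by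
  rw [ext_apply (N + 1) _ (m + 1) (by omega), ext_apply N u m hm]
  have h1 : (⟨m + 1, by omega⟩ : Fin (N + 2)) = Fin.succ ⟨m, hm⟩ := by
    apply Fin.ext; simp
  rw [h1, Fin.cons_succ]

lemma cons_last (N : ℕ) (j : ℤ) (u : Fin (N + 1) → ℤ) :
    (Fin.cons j u : Fin (N + 2) → ℤ) (Fin.last (N + 1)) = u (Fin.last N) := by
  have h1 : Fin.last (N + 1) = Fin.succ (Fin.last N) := by
    apply Fin.ext; simp
  rw [h1, Fin.cons_succ]

lemma W_cons (N : ℕ) (i j : ℤ) (u : Fin (N + 1) → ℤ) :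
    W p q i (N + 1) (ext (N + 1) (Fin.cons j u)) =
      (if j = i then (1 : ℝ) else 0) *
        ((∏ m ∈ Finset.range N, bdKernel p q (ext N u m) (ext N u (m + 1))) *
          bdKernel p q j (ext N u 0)) := by
  unfold W
  rw [Finset.prod_range_succ', ext_cons_zero]
  have h01 : ext (N + 1) (Fin.cons j u) 1 = ext N u 0 := by
    simpa using ext_cons_succ N j u 0 (by omega)
  rw [h01]
  have hprod : (∏ m ∈ Finset.range N,
      bdKernel p q (ext (N + 1) (Fin.cons j u) (m + 1)) (ext (N + 1) (Fin.cons j u) (m + 1 + 1)))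
      = ∏ m ∈ Finset.range N, bdKernel p q (ext N u m) (ext N u (m + 1)) := by
    refine Finset.prod_congr rfl fun m hm => ?_
    have hm' : m < N := Finset.mem_range.mp hm
    rw [ext_cons_succ N j u m (by omega), ext_cons_succ N j u (m + 1) (by omega)]
  rw [hprod]

lemma W_start (n : ℕ) (j : ℤ) (v : Fin (n + 1) → ℤ) :
    ENNReal.ofReal (W p q j n (ext n v)) =
      if ext n v 0 = j then
        ENNReal.ofReal (∏ m ∈ Finset.range n, bdKernel p q (ext n v m) (ext n v (m + 1)))
      else 0 := by
  unfold W
  by_cases h : ext n v 0 = j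
  · rw [if_pos h, if_pos h, one_mul]
  · rw [if_neg h, if_neg h, zero_mul, ENNReal.ofReal_zero]

include hp hq in
lemma A_eq (N : ℕ) (i : ℤ) :
    (∑' v : Fin (N + 1) → ℤ,
        if v (Fin.last N) = -1 then ENNReal.ofReal (W p q i N (ext N v)) else 0)
      = ENNReal.ofReal (aseq p q N i) := by
  induction N generalizing i with
  | zero =>
    rw [← Equiv.tsum_eq (Equiv.funUnique (Fin 1) ℤ).symm]
    have hterm : ∀ x : ℤ,
        (if ((Equiv.funUnique (Fin 1) ℤ).symm x) (Fin.last 0) = -1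
          then ENNReal.ofReal (W p q i 0 (ext 0 ((Equiv.funUnique (Fin 1) ℤ).symm x))) else 0)
        = if x = -1 then (if i = -1 then ENNReal.ofReal 1 else 0) else 0 := by
      intro x
      have h0 : ((Equiv.funUnique (Fin 1) ℤ).symm x) (Fin.last 0) = x := rfl
      have h1 : ext 0 ((Equiv.funUnique (Fin 1) ℤ).symm x) 0 = x := rfl
      rw [h0]
      by_cases hx : x = -1
      · subst hx
        rw [if_pos rfl, if_pos rfl]
        unfold W
        rw [h1, Finset.prod_range_zero, mul_one]
        by_cases hi : i = -1
        · rw [if_pos hi, if_pos (by rw [hi])]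
        · rw [if_neg hi, if_neg (fun h => hi h.symm), ENNReal.ofReal_zero]
      · rw [if_neg hx, if_neg hx]
    rw [tsum_congr hterm, tsum_ite_eq]
    rw [aseq_zero]
    by_cases hi : i = -1
    · rw [if_pos hi, if_pos hi]
    · rw [if_neg hi, if_neg hi, ENNReal.ofReal_zero]
  | succ N ih =>
    rw [← Equiv.tsum_eq (Fin.consEquiv (fun _ : Fin (N + 2) => ℤ))]
    rw [ENNReal.tsum_prod']
    have hcons : ∀ (j : ℤ) (u : Fin (N + 1) → ℤ),
        (Fin.consEquiv (fun _ : Fin (N + 2) => ℤ)) (j, u) = Fin.cons j u := fun _ _ => rfl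
    -- abbreviations
    set R : (Fin (N + 1) → ℤ) → ℝ :=
      fun u => ∏ m ∈ Finset.range N, bdKernel p q (ext N u m) (ext N u (m + 1)) with hR
    have hRnn : ∀ u, 0 ≤ R u := fun u => R_nonneg hp hq N (ext N u)
    have hterm : ∀ (j : ℤ) (u : Fin (N + 1) → ℤ),
        (if (Fin.consEquiv (fun _ : Fin (N + 2) => ℤ)) (j, u) (Fin.last (N + 1)) = -1
          then ENNReal.ofReal (W p q i (N + 1)
            (ext (N + 1) ((Fin.consEquiv (fun _ : Fin (N + 2) => ℤ)) (j, u)))) else 0)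
        = if j = i then
            (if u (Fin.last N) = -1
              then ENNReal.ofReal (bdKernel p q i (ext N u 0) * R u) else 0)
          else 0 := by
      intro j u
      rw [hcons, cons_last, W_cons]
      by_cases hj : j = i
      · subst hj
        rw [if_pos rfl, if_pos rfl, one_mul]
        by_cases hu : u (Fin.last N) = -1
        · rw [if_pos hu, if_pos hu, mul_comm (R u)]
        · rw [if_neg hu, if_neg hu]
      · rw [if_neg hj, if_neg hj, zero_mul, ENNReal.ofReal_zero]
        split <;> rfl
    rw [tsum_congr fun j => tsum_congr fun u => hterm j u]
    have houter : ∀ j : ℤ,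
        (∑' u : Fin (N + 1) → ℤ, if j = i then
            (if u (Fin.last N) = -1
              then ENNReal.ofReal (bdKernel p q i (ext N u 0) * R u) else 0)
          else 0)
        = if j = i then (∑' u : Fin (N + 1) → ℤ,
            if u (Fin.last N) = -1
              then ENNReal.ofReal (bdKernel p q i (ext N u 0) * R u) else 0) else 0 := by
      intro j
      by_cases hj : j = i
      · subst hj; simp
      · simp only [if_neg hj, tsum_zero]
    rw [tsum_congr houter, tsum_ite_eq]
    -- key inner identity: sums with a fixed start
    have hstart : ∀ j : ℤ,
        (∑' u : Fin (N + 1) → ℤ,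
          if u (Fin.last N) = -1 then
            (if ext N u 0 = j then ENNReal.ofReal (R u) else 0) else 0)
        = ENNReal.ofReal (aseq p q N j) := by
      intro j
      rw [← ih j]
      apply tsum_congr
      intro u
      rw [W_start]
    by_cases hi : 0 ≤ i
    · -- split the kernel
      have hsplit : ∀ u : Fin (N + 1) → ℤ,
          (if u (Fin.last N) = -1
            then ENNReal.ofReal (bdKernel p q i (ext N u 0) * R u) else 0)
          = (ENNReal.ofReal (p i.toNat) *
              (if u (Fin.last N) = -1 then
                (if ext N u 0 = i + 1 then ENNReal.ofReal (R u) else 0) else 0))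
            + (ENNReal.ofReal (q i.toNat) *
              (if u (Fin.last N) = -1 then
                (if ext N u 0 = i - 1 then ENNReal.ofReal (R u) else 0) else 0)) := by
        intro u
        by_cases hu : u (Fin.last N) = -1
        · rw [if_pos hu, if_pos hu, if_pos hu]
          unfold bdKernel
          rw [if_pos hi]
          by_cases h1 : ext N u 0 = i + 1
          · rw [if_pos h1, if_pos h1, if_neg (by omega : ¬ ext N u 0 = i - 1),
              ENNReal.ofReal_mul (hp i.toNat).1.le, mul_zero, add_zero]
          · rw [if_neg h1, if_neg h1, mul_zero, zero_add]
            by_cases h2 : ext N u 0 = i - 1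
            · rw [if_pos h2, if_pos h2, ENNReal.ofReal_mul (hq i.toNat).1.le]
            · rw [if_neg h2, if_neg h2, zero_mul, ENNReal.ofReal_zero, mul_zero]
        · rw [if_neg hu, if_neg hu, if_neg hu, mul_zero, mul_zero, add_zero]
      rw [tsum_congr hsplit, ENNReal.tsum_add, ENNReal.tsum_mul_left, ENNReal.tsum_mul_left,
        hstart (i + 1), hstart (i - 1),
        ← ENNReal.ofReal_mul (hp i.toNat).1.le, ← ENNReal.ofReal_mul (hq i.toNat).1.le,
        ← ENNReal.ofReal_add (mul_nonneg (hp _).1.le (aseq_nonneg hp hq _ _))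
          (mul_nonneg (hq _).1.le (aseq_nonneg hp hq _ _))]
      rw [aseq_succ, if_pos hi]
    · -- absorbing case
      have hsplit : ∀ u : Fin (N + 1) → ℤ,
          (if u (Fin.last N) = -1
            then ENNReal.ofReal (bdKernel p q i (ext N u 0) * R u) else 0)
          = (if u (Fin.last N) = -1 then
                (if ext N u 0 = i then ENNReal.ofReal (R u) else 0) else 0) := by
        intro u
        by_cases hu : u (Fin.last N) = -1
        · rw [if_pos hu, if_pos hu]
          unfold bdKernel
          rw [if_neg hi]
          by_cases h1 : ext N u 0 = i
          · rw [if_pos h1, if_pos h1, one_mul]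
          · rw [if_neg h1, if_neg h1, zero_mul, ENNReal.ofReal_zero]
        · rw [if_neg hu, if_neg hu]
      rw [tsum_congr hsplit, hstart i, aseq_succ, if_neg hi]

end Comb

section Meas

variable {p q : ℕ → ℝ} {μ : ℤ → Measure (ℕ → ℤ)}

lemma cyl_measurable (n : ℕ) (g : ℕ → ℤ) :
    MeasurableSet {ω : ℕ → ℤ | ∀ m ≤ n, ω m = g m} := by
  have hs : {ω : ℕ → ℤ | ∀ m ≤ n, ω m = g m}
      = ⋂ m, ⋂ (_ : m ≤ n), (fun ω : ℕ → ℤ => ω m) ⁻¹' {g m} := by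
    ext ω; simp
  rw [hs]
  exact MeasurableSet.iInter fun m => MeasurableSet.iInter fun _ =>
    measurable_pi_apply m (measurableSet_singleton _)

lemma measure_decomp (hlaw : IsBDLaw p q μ) (i : ℤ) (n : ℕ)
    (P : (Fin (n + 1) → ℤ) → Prop) [DecidablePred P] :
    μ i {ω : ℕ → ℤ | P (fun m => ω m)} =
      ∑' v : Fin (n + 1) → ℤ, if P v then ENNReal.ofReal (W p q i n (ext n v)) else 0 := by
  have hset : {ω : ℕ → ℤ | P (fun m => ω m)}
      = ⋃ v : {v : Fin (n + 1) → ℤ | P v},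
          {ω : ℕ → ℤ | ∀ m ≤ n, ω m = ext n v.1 m} := by
    ext ω
    simp only [Set.mem_setOf_eq, Set.mem_iUnion]
    constructor
    · intro hω
      refine ⟨⟨fun m => ω m, hω⟩, fun m hm => ?_⟩
      rw [ext_apply n _ m (by omega)]
    · rintro ⟨⟨v, hv⟩, hω⟩
      have hvv : (fun m : Fin (n + 1) => ω m) = v := by
        funext m
        rw [hω m (Nat.lt_succ_iff.mp m.isLt), ext_apply n v m m.isLt, Fin.eta]
      rw [hvv]; exact hv
  rw [hset, measure_iUnion ?hd ?hm]
  case hd =>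
    intro v w hvw
    rw [Function.onFun, Set.disjoint_left]
    intro ω h1 h2
    apply hvw
    apply Subtype.ext
    funext m
    have e1 : ω m = ext n v.1 m := h1 m (Nat.lt_succ_iff.mp m.isLt)
    have e2 : ω m = ext n w.1 m := h2 m (Nat.lt_succ_iff.mp m.isLt)
    rw [ext_apply n v.1 m m.isLt] at e1
    rw [ext_apply n w.1 m m.isLt] at e2
    rw [Fin.eta] at e1 e2
    rw [← e1, ← e2]
  case hm => exact fun v => cyl_measurable n (ext n v.1)
  calc (∑' v : {v : Fin (n + 1) → ℤ | P v}, μ i {ω : ℕ → ℤ | ∀ m ≤ n, ω m = ext n v.1 m})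
      = ∑' v : {v : Fin (n + 1) → ℤ | P v}, ENNReal.ofReal (W p q i n (ext n v.1)) :=
        tsum_congr fun v => hlaw i n (ext n v.1)
    _ = ∑' v : Fin (n + 1) → ℤ,
          Set.indicator {v | P v} (fun v => ENNReal.ofReal (W p q i n (ext n v))) v :=
        tsum_subtype {v : Fin (n + 1) → ℤ | P v}
          (fun v => ENNReal.ofReal (W p q i n (ext n v)))
    _ = ∑' v : Fin (n + 1) → ℤ, if P v then ENNReal.ofReal (W p q i n (ext n v)) else 0 :=
        tsum_congr fun v => by rw [Set.indicator_apply]; rfl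

lemma measure_B (hp : ∀ i, p i ∈ Set.Ioo (0 : ℝ) 1) (hq : ∀ i, q i ∈ Set.Ioo (0 : ℝ) 1)
    (hlaw : IsBDLaw p q μ) (i : ℤ) (N : ℕ) :
    μ i {ω : ℕ → ℤ | ω N = -1} = ENNReal.ofReal (aseq p q N i) := by
  classical
  have hset : {ω : ℕ → ℤ | ω N = -1}
      = {ω : ℕ → ℤ | (fun v : Fin (N + 1) → ℤ => v (Fin.last N) = -1) (fun m => ω m)} := rfl
  rw [hset, measure_decomp hlaw i N (fun v => v (Fin.last N) = -1), A_eq hp hq N i]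

lemma measure_null (hlaw : IsBDLaw p q μ) (i : ℤ) (k : ℕ) :
    μ i {ω : ℕ → ℤ | ω k = -1 ∧ ω (k + 1) ≠ -1} = 0 := by
  classical
  have hset : {ω : ℕ → ℤ | ω k = -1 ∧ ω (k + 1) ≠ -1}
      = {ω : ℕ → ℤ | (fun v : Fin (k + 1 + 1) → ℤ =>
          v ⟨k, by omega⟩ = -1 ∧ ¬ v ⟨k + 1, by omega⟩ = -1) (fun m => ω m)} := rfl
  rw [hset, measure_decomp hlaw i (k + 1)
    (fun v => v ⟨k, by omega⟩ = -1 ∧ ¬ v ⟨k + 1, by omega⟩ = -1)]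
  rw [ENNReal.tsum_eq_zero]
  intro v
  split
  · rename_i hv
    have hfac : bdKernel p q (ext (k + 1) v k) (ext (k + 1) v (k + 1)) = 0 := by
      rw [ext_apply (k + 1) v k (by omega), ext_apply (k + 1) v (k + 1) (by omega)]
      rw [hv.1]
      unfold bdKernel
      rw [if_neg (by omega)]
      rw [if_neg hv.2]
    have hzero : ∏ m ∈ Finset.range (k + 1),
        bdKernel p q (ext (k + 1) v m) (ext (k + 1) v (m + 1)) = 0 :=
      Finset.prod_eq_zero (Finset.mem_range.mpr (by omega)) hfac
    unfold W
    rw [hzero, mul_zero, ENNReal.ofReal_zero]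
  · rfl

end Meas

end BDProof

theorem stmt3 (p q : ℕ → ℝ)
    (hp : ∀ i, p i ∈ Set.Ioo (0 : ℝ) 1) (hq : ∀ i, q i ∈ Set.Ioo (0 : ℝ) 1)
    (hpq : ∀ i, p i + q i = 1)
    (μ : ℤ → Measure (ℕ → ℤ)) (hμ : ∀ i, IsProbabilityMeasure (μ i))
    (hlaw : IsBDLaw p q μ)
    (hc : Summable (cseq p q)) :
    ∀ i : ℕ,
      μ i {ω : ℕ → ℤ | ∃ n : ℕ, ω n = -1} =
        ENNReal.ofReal ((∑' n : ℕ, cseq p q (n + i)) / (1 + ∑' n : ℕ, cseq p q n)) ∧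
      μ i {ω : ℕ → ℤ | ∃ n : ℕ, ω n = -1} < 1 := by
  intro i
  classical
  have hD := BDProof.one_add_T_pos hp hq hc
  have hS : (∑' n : ℕ, cseq p q n) = BDProof.T p q 0 := by
    unfold BDProof.T; norm_num
  have hTi : (∑' n : ℕ, cseq p q (n + i)) = BDProof.T p q i := rfl
  have key : μ i {ω : ℕ → ℤ | ∃ n : ℕ, ω n = -1}
      = ENNReal.ofReal (BDProof.alim p q i) := by
    have hBA : ∀ N : ℕ, μ i {ω : ℕ → ℤ | ∃ n ≤ N, ω n = -1}
        = ENNReal.ofReal (BDProof.aseq p q N i) := by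
      intro N
      have h1 := BDProof.measure_B hp hq hlaw i N
      have hsub : {ω : ℕ → ℤ | ω N = -1} ⊆ {ω : ℕ → ℤ | ∃ n ≤ N, ω n = -1} :=
        fun ω hω => ⟨N, le_rfl, hω⟩
      have hnull : μ i (⋃ k : ℕ, {ω : ℕ → ℤ | ω k = -1 ∧ ω (k + 1) ≠ -1}) = 0 := by
        apply le_antisymm _ (zero_le)
        refine le_trans (measure_iUnion_le _) ?_
        simp [BDProof.measure_null hlaw i]
      have hdiff : {ω : ℕ → ℤ | ∃ n ≤ N, ω n = -1} \ {ω : ℕ → ℤ | ω N = -1}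
          ⊆ ⋃ k : ℕ, {ω : ℕ → ℤ | ω k = -1 ∧ ω (k + 1) ≠ -1} := by
        rintro ω ⟨⟨n, hn, hωn⟩, hωN⟩
        have hωN' : ¬ ω N = -1 := hωN
        have h2 : ω (Nat.findGreatest (fun m => ω m = -1) N) = -1 :=
          Nat.findGreatest_spec (P := fun m => ω m = -1) hn hωn
        have h3 : Nat.findGreatest (fun m => ω m = -1) N ≤ N := Nat.findGreatest_le N
        have h4 : Nat.findGreatest (fun m => ω m = -1) N < N :=
          lt_of_le_of_ne h3 (fun h => hωN' (h ▸ h2))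
        have h5 : ¬ ω (Nat.findGreatest (fun m => ω m = -1) N + 1) = -1 :=
          Nat.findGreatest_is_greatest (P := fun m => ω m = -1) (Nat.lt_succ_self _) (by omega)
        exact Set.mem_iUnion.mpr ⟨Nat.findGreatest (fun m => ω m = -1) N, h2, h5⟩
      apply le_antisymm
      · have hsub2 : {ω : ℕ → ℤ | ∃ n ≤ N, ω n = -1}
            ⊆ {ω : ℕ → ℤ | ω N = -1}
              ∪ ({ω : ℕ → ℤ | ∃ n ≤ N, ω n = -1} \ {ω : ℕ → ℤ | ω N = -1}) := by
          intro ω hω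
          by_cases h : ω ∈ {ω : ℕ → ℤ | ω N = -1}
          · exact Or.inl h
          · exact Or.inr ⟨hω, h⟩
        have m1 := measure_mono (μ := μ i) hsub2
        have m2 := measure_union_le (μ := μ i) {ω : ℕ → ℤ | ω N = -1}
          ({ω : ℕ → ℤ | ∃ n ≤ N, ω n = -1} \ {ω : ℕ → ℤ | ω N = -1})
        have m3 : μ i ({ω : ℕ → ℤ | ∃ n ≤ N, ω n = -1} \ {ω : ℕ → ℤ | ω N = -1}) = 0 :=
          le_antisymm (hnull ▸ measure_mono hdiff) (zero_le)
        refine le_trans m1 (le_trans m2 ?_)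
        rw [h1, m3, add_zero]
      · rw [← h1]; exact measure_mono hsub
    have hU : {ω : ℕ → ℤ | ∃ n : ℕ, ω n = -1}
        = ⋃ N : ℕ, {ω : ℕ → ℤ | ∃ n ≤ N, ω n = -1} := by
      ext ω
      simp only [Set.mem_setOf_eq, Set.mem_iUnion]
      exact ⟨fun ⟨n, hn⟩ => ⟨n, n, le_rfl, hn⟩, fun ⟨N, n, _, hn⟩ => ⟨n, hn⟩⟩
    have hmono : Monotone fun N : ℕ => {ω : ℕ → ℤ | ∃ n ≤ N, ω n = -1} := by
      intro M N h ω
      rintro ⟨n, hn, hω⟩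
      exact ⟨n, hn.trans h, hω⟩
    rw [hU, Directed.measure_iUnion hmono.directed_le]
    have hm2 : Monotone fun N => ENNReal.ofReal (BDProof.aseq p q N i) :=
      monotone_nat_of_le_succ fun N => ENNReal.ofReal_le_ofReal (BDProof.aseq_mono hp hq N i)
    have ht1 := tendsto_atTop_iSup hm2
    have ht2 : Filter.Tendsto (fun N => ENNReal.ofReal (BDProof.aseq p q N i))
        Filter.atTop (nhds (ENNReal.ofReal (BDProof.alim p q i))) :=
      (ENNReal.continuous_ofReal.tendsto _).comp (BDProof.tendsto_aseq hp hq hpq hc i)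
    have huniq := tendsto_nhds_unique ht1 ht2
    rw [iSup_congr hBA]
    exact huniq
  have hval := BDProof.alim_val hp hq hpq hc i
  constructor
  · rw [key, hval, hTi, hS]
  · rw [key, hval, ENNReal.ofReal_lt_one, div_lt_one hD]
    have := BDProof.T_le hp hq hc i
    linarith
end

section
/- Suppose ∑_{n=0}^{∞} c_n = ∞ and the series ∑_{n=1}^{∞} a_n converges, where a_n = ∏_{i=1}^{n} (p_{i−1}/q_i). Then absorption is ergodic: for every integer i ≥ 0, the absorption time T(ω) = inf{n ∈ ℕ : ω_n = −1} (an ℕ∪{∞}-valued function on ℤ^ℕ) has finite expectation under μ_i, i.e. ∫ T dμ_i < ∞ (in particular T is μ_i-almost surely finite). -/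
open MeasureTheory
open scoped ENNReal

/-- `aseq p q n = ∏_{i=1}^{n} p_{i-1} / q_i`. -/
noncomputable def aseq (p q : ℕ → ℝ) (n : ℕ) : ℝ :=
  ∏ i ∈ Finset.Icc 1 n, p (i - 1) / q i

-- modified kernel killing -1
noncomputable def K0 (p q : ℕ → ℝ) (i z : ℤ) : ℝ≥0∞ :=
  if z = -1 then 0 else ENNReal.ofReal (bdKernel p q i z)

noncomputable def bdCost (p q : ℕ → ℝ) (n : ℕ) (i : ℤ) : ℝ≥0∞ :=
  ∑' v : Fin (n + 1) → ℤ,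
    (if v 0 = i then (1 : ℝ≥0∞) else 0) * ∏ m : Fin n, K0 p q (v m.castSucc) (v m.succ)

lemma bdKernel_nonneg_s4 {p q : ℕ → ℝ} (hp : ∀ i, p i ∈ Set.Ioo (0:ℝ) 1)
    (hq : ∀ i, q i ∈ Set.Ioo (0:ℝ) 1) (i j : ℤ) : 0 ≤ bdKernel p q i j := by
  unfold bdKernel
  split_ifs <;> first | exact (hp _).1.le | exact (hq _).1.le | norm_num

lemma bdCost_zero (p q : ℕ → ℝ) (i : ℤ) : bdCost p q 0 i = 1 := by
  unfold bdCost
  rw [← (Equiv.funUnique (Fin 1) ℤ).symm.tsum_eq]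
  simp only [Equiv.funUnique_symm_apply, Finset.univ_eq_empty, Finset.prod_empty, mul_one]
  exact tsum_ite_eq i 1

lemma bdCost_succ (p q : ℕ → ℝ) (n : ℕ) (i : ℤ) :
    bdCost p q (n + 1) i = ∑' z : ℤ, K0 p q i z * bdCost p q n z := by
  classical
  set G : (Fin (n+1) → ℤ) → ℝ≥0∞ := fun w => ∏ m : Fin n, K0 p q (w m.castSucc) (w m.succ) with hG
  have key : bdCost p q (n+1) i = ∑' w : Fin (n+1) → ℤ, K0 p q i (w 0) * G w := by
    unfold bdCost
    rw [← (Fin.consEquiv (fun _ : Fin (n + 2) => ℤ)).tsum_eq]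
    have lhs : ∀ c : ℤ × (Fin (n+1) → ℤ),
        (if (Fin.consEquiv (fun _ : Fin (n + 2) => ℤ)) c 0 = i then (1:ℝ≥0∞) else 0) *
          ∏ m : Fin (n+1), K0 p q ((Fin.consEquiv (fun _ : Fin (n + 2) => ℤ)) c m.castSucc)
            ((Fin.consEquiv (fun _ : Fin (n + 2) => ℤ)) c m.succ)
        = (fun (z : ℤ) (w : Fin (n+1) → ℤ) =>
            (if z = i then (1:ℝ≥0∞) else 0) * (K0 p q z (w 0) * G w)) c.1 c.2 := by
      rintro ⟨z, w⟩
      simp [Fin.consEquiv, Fin.prod_univ_succ, ← Fin.succ_castSucc, hG]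
    rw [tsum_congr lhs, ENNReal.tsum_prod (f := fun (z : ℤ) (w : Fin (n+1) → ℤ) =>
      (if z = i then (1:ℝ≥0∞) else 0) * (K0 p q z (w 0) * G w))]
    have inner : ∀ z : ℤ, ∑' w : Fin (n+1) → ℤ,
        (if z = i then (1:ℝ≥0∞) else 0) * (K0 p q z (w 0) * G w)
        = (if z = i then (1:ℝ≥0∞) else 0) * ∑' w : Fin (n+1) → ℤ, K0 p q z (w 0) * G w :=
      fun z => ENNReal.tsum_mul_left
    rw [tsum_congr inner, tsum_eq_single i (by intro z hz; simp [hz])]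
    simp
  rw [key]
  have rhs : ∀ z : ℤ, K0 p q i z * bdCost p q n z
      = ∑' w : Fin (n+1) → ℤ, K0 p q i z * ((if w 0 = z then (1:ℝ≥0∞) else 0) * G w) := by
    intro z
    unfold bdCost
    rw [ENNReal.tsum_mul_left]
  rw [tsum_congr rhs,
    ENNReal.tsum_comm (f := fun (z : ℤ) (w : Fin (n+1) → ℤ) =>
      K0 p q i z * ((if w 0 = z then (1:ℝ≥0∞) else 0) * G w))]
  refine tsum_congr fun w => ?_
  rw [tsum_eq_single (w 0) (by intro z hz; simp [Ne.symm hz])]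
  simp

lemma tsum_K0_mul (p q : ℕ → ℝ) {i : ℤ} (hi : 0 ≤ i) (F : ℤ → ℝ≥0∞) :
    ∑' z : ℤ, K0 p q i z * F z =
      ENNReal.ofReal (p i.toNat) * F (i + 1) +
        (if i = 0 then 0 else ENNReal.ofReal (q i.toNat) * F (i - 1)) := by
  classical
  rw [tsum_eq_sum (s := ({i + 1, i - 1} : Finset ℤ)) ?_]
  · rw [Finset.sum_pair (by omega)]
    congr 1
    · have h1 : i + 1 ≠ -1 := by omega
      simp only [K0, bdKernel, if_pos hi, if_neg h1, if_pos rfl]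
      norm_num
    · by_cases h0 : i = 0
      · subst h0
        simp [K0]
      · have h1 : i - 1 ≠ -1 := by omega
        have h2 : i - 1 ≠ i + 1 := by omega
        simp only [K0, bdKernel, if_pos hi, if_neg h1, if_neg h2, if_pos rfl, if_neg h0]
        norm_num
  · intro z hz
    simp only [Finset.mem_insert, Finset.mem_singleton] at hz
    push_neg at hz
    have : K0 p q i z = 0 := by
      simp only [K0, bdKernel, if_pos hi, if_neg hz.1, if_neg hz.2]
      split_ifs <;> simp
    rw [this, zero_mul]

section RealSide

variable (p q : ℕ → ℝ)

noncomputable def rseq (k : ℕ) : ℝ := ∑' j : ℕ, aseq p q (j + k)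

noncomputable def hseq (k : ℕ) : ℝ := rseq p q k / (aseq p q k * q k)

noncomputable def gseq (k : ℕ) : ℝ := ∑ m ∈ Finset.range (k + 1), hseq p q m

variable {p q}
variable (hp : ∀ i, p i ∈ Set.Ioo (0:ℝ) 1) (hq : ∀ i, q i ∈ Set.Ioo (0:ℝ) 1)
  (hpq : ∀ i, p i + q i = 1) (ha : Summable (fun n : ℕ => aseq p q (n + 1)))

include hp hq in
lemma aseq_pos (n : ℕ) : 0 < aseq p q n :=
  Finset.prod_pos fun i _ => div_pos (hp _).1 (hq _).1

include ha in
lemma summable_aseq : Summable (aseq p q) := (summable_nat_add_iff 1).mp ha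

include ha in
lemma summable_shift (k : ℕ) : Summable (fun j : ℕ => aseq p q (j + k)) :=
  (summable_nat_add_iff k).mpr (summable_aseq ha)

include hp hq ha in
lemma rseq_nonneg (k : ℕ) : 0 ≤ rseq p q k :=
  tsum_nonneg fun j => (aseq_pos hp hq _).le

include ha in
lemma rseq_succ (k : ℕ) : rseq p q k = aseq p q k + rseq p q (k + 1) := by
  have h := Summable.tsum_eq_zero_add (summable_shift ha k)
  unfold rseq
  rw [h]
  congr 1
  · norm_num
  · exact tsum_congr fun j => by congr 1; omega

lemma aseq_succ (k : ℕ) : aseq p q (k + 1) = aseq p q k * (p k / q (k + 1)) := by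
  rw [aseq, Finset.prod_Icc_succ_top (Nat.succ_le_succ (Nat.zero_le k)), ← aseq]
  simp

include hp hq ha in
lemma key_h (k : ℕ) : q k * hseq p q k = 1 + p k * hseq p q (k + 1) := by
  have hak : 0 < aseq p q k := aseq_pos hp hq k
  have hak1 : 0 < aseq p q (k + 1) := aseq_pos hp hq (k + 1)
  have hqk : 0 < q k := (hq k).1
  have hqk1 : 0 < q (k + 1) := (hq (k + 1)).1
  have hpk : 0 < p k := (hp k).1
  have hr := rseq_succ ha k
  have hak' : aseq p q k ≠ 0 := ne_of_gt hak
  have hqk' : q k ≠ 0 := ne_of_gt hqk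
  have hqk1' : q (k + 1) ≠ 0 := ne_of_gt hqk1
  have hpk' : p k ≠ 0 := ne_of_gt hpk
  rw [hseq, hseq, aseq_succ, hr]
  field_simp

include hp hq ha in
lemma hseq_nonneg (k : ℕ) : 0 ≤ hseq p q k :=
  div_nonneg (rseq_nonneg hp hq ha k) (mul_nonneg (aseq_pos hp hq k).le (hq k).1.le)

include hp hq ha in
lemma gseq_nonneg (k : ℕ) : 0 ≤ gseq p q k :=
  Finset.sum_nonneg fun m _ => hseq_nonneg hp hq ha m

include hp hq hpq ha in
lemma gseq_key (k : ℕ) :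
    1 + p k * gseq p q (k + 1) + (if k = 0 then 0 else q k * gseq p q (k - 1)) ≤ gseq p q k := by
  cases k with
  | zero =>
    have h := key_h hp hq ha 0
    have hpq0 := hpq 0
    rw [if_pos rfl, add_zero]
    have g0 : gseq p q 0 = hseq p q 0 := by simp [gseq]
    have g1 : gseq p q 1 = hseq p q 0 + hseq p q 1 := by
      simp [gseq, Finset.sum_range_succ]
    rw [g0, g1]
    have e : 1 + p 0 * (hseq p q 0 + hseq p q 1) = hseq p q 0 := by
      linear_combination (-1 : ℝ) * h + hseq p q 0 * hpq0
    linarith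
  | succ j =>
    have h := key_h hp hq ha (j + 1)
    have hpqj := hpq (j + 1)
    rw [if_neg (Nat.succ_ne_zero j), Nat.add_sub_cancel]
    have g1 : gseq p q (j + 1) = gseq p q j + hseq p q (j + 1) := by
      simp [gseq, Finset.sum_range_succ]
    have g2 : gseq p q (j + 2) = gseq p q (j + 1) + hseq p q (j + 2) := by
      simp [gseq, Finset.sum_range_succ]
    rw [show j + 1 + 1 = j + 2 from rfl, g2, g1]
    have e : 1 + p (j + 1) * (gseq p q j + hseq p q (j + 1) + hseq p q (j + 2))
        + q (j + 1) * gseq p q j = gseq p q j + hseq p q (j + 1) := by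
      linear_combination (-1 : ℝ) * h + (gseq p q j + hseq p q (j + 1)) * hpqj
    linarith

end RealSide

lemma sum_bdCost_le {p q : ℕ → ℝ} (hp : ∀ i, p i ∈ Set.Ioo (0:ℝ) 1)
    (hq : ∀ i, q i ∈ Set.Ioo (0:ℝ) 1) (hpq : ∀ i, p i + q i = 1)
    (ha : Summable (fun n : ℕ => aseq p q (n + 1))) :
    ∀ N : ℕ, ∀ i : ℤ, 0 ≤ i →
      ∑ n ∈ Finset.range N, bdCost p q n i ≤ ENNReal.ofReal (gseq p q i.toNat) := by
  intro N
  induction N with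
  | zero => intro i _; simp
  | succ N ih =>
    intro i hi
    rw [Finset.sum_range_succ']
    simp only [bdCost_zero]
    have swap : ∑ n ∈ Finset.range N, bdCost p q (n + 1) i
        = ∑' z : ℤ, K0 p q i z * ∑ n ∈ Finset.range N, bdCost p q n z := by
      simp only [bdCost_succ, Finset.mul_sum]
      rw [Summable.tsum_finsetSum (fun _ _ => ENNReal.summable)]
    rw [swap, tsum_K0_mul p q hi]
    set F : ℤ → ℝ≥0∞ := fun z => ∑ n ∈ Finset.range N, bdCost p q n z with hF
    have h1 : F (i + 1) ≤ ENNReal.ofReal (gseq p q (i.toNat + 1)) := by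
      have := ih (i + 1) (by omega)
      rwa [show (i + 1).toNat = i.toNat + 1 by omega] at this
    by_cases h0 : i = 0
    · subst h0
      rw [if_pos rfl]
      have h1' : F (0 + 1) ≤ ENNReal.ofReal (gseq p q 1) := by simpa using h1
      calc ENNReal.ofReal (p (0:ℤ).toNat) * F (0 + 1) + 0 + 1
          ≤ ENNReal.ofReal (p 0) * ENNReal.ofReal (gseq p q 1) + 0 + 1 := by
            exact add_le_add (add_le_add
              (mul_le_mul' (by norm_num) h1') le_rfl) le_rfl
        _ = ENNReal.ofReal (1 + p 0 * gseq p q 1) := by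
            rw [add_zero, ← ENNReal.ofReal_mul (hp 0).1.le, ← ENNReal.ofReal_one,
              ← ENNReal.ofReal_add (mul_nonneg (hp 0).1.le (gseq_nonneg hp hq ha 1)) zero_le_one]
            ring_nf
        _ ≤ ENNReal.ofReal (gseq p q (0:ℤ).toNat) := by
            apply ENNReal.ofReal_le_ofReal
            have := gseq_key hp hq hpq ha 0
            rw [if_pos rfl] at this
            simpa using this
    · rw [if_neg h0]
      have h2 : F (i - 1) ≤ ENNReal.ofReal (gseq p q (i.toNat - 1)) := by
        have := ih (i - 1) (by omega)
        rwa [show (i - 1).toNat = i.toNat - 1 by omega] at this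
      have hk0 : i.toNat ≠ 0 := by omega
      calc ENNReal.ofReal (p i.toNat) * F (i + 1)
            + ENNReal.ofReal (q i.toNat) * F (i - 1) + 1
          ≤ ENNReal.ofReal (p i.toNat) * ENNReal.ofReal (gseq p q (i.toNat + 1))
            + ENNReal.ofReal (q i.toNat) * ENNReal.ofReal (gseq p q (i.toNat - 1)) + 1 := by
            gcongr
        _ = ENNReal.ofReal (1 + p i.toNat * gseq p q (i.toNat + 1)
              + q i.toNat * gseq p q (i.toNat - 1)) := by
            rw [← ENNReal.ofReal_mul (hp _).1.le, ← ENNReal.ofReal_mul (hq _).1.le,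
              ← ENNReal.ofReal_add (mul_nonneg (hp _).1.le (gseq_nonneg hp hq ha _))
                (mul_nonneg (hq _).1.le (gseq_nonneg hp hq ha _)),
              ← ENNReal.ofReal_one,
              ← ENNReal.ofReal_add (add_nonneg (mul_nonneg (hp _).1.le (gseq_nonneg hp hq ha _))
                (mul_nonneg (hq _).1.le (gseq_nonneg hp hq ha _))) zero_le_one]
            ring_nf
        _ ≤ ENNReal.ofReal (gseq p q i.toNat) := by
            apply ENNReal.ofReal_le_ofReal
            have := gseq_key hp hq hpq ha i.toNat
            rw [if_neg hk0] at this
            linarith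

lemma measure_noHit_le {p q : ℕ → ℝ} (hp : ∀ i, p i ∈ Set.Ioo (0:ℝ) 1)
    (hq : ∀ i, q i ∈ Set.Ioo (0:ℝ) 1) {μ : ℤ → Measure (ℕ → ℤ)}
    (hlaw : IsBDLaw p q μ) (i : ℤ) (n : ℕ) :
    μ i {ω : ℕ → ℤ | ∀ m ≤ n, ω m ≠ -1} ≤ bdCost p q n i := by
  classical
  set A : Set (ℕ → ℤ) := {ω | ∀ m ≤ n, ω m ≠ -1} with hA
  set ext : (Fin (n+1) → ℤ) → ℕ → ℤ :=
    fun v m => if h : m < n + 1 then v ⟨m, h⟩ else 0 with hext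
  have cover : A ⊆ ⋃ v : Fin (n+1) → ℤ, (A ∩ {ω | ∀ m ≤ n, ω m = ext v m}) := by
    intro ω hω
    refine Set.mem_iUnion.2 ⟨fun m => ω m.val, hω, fun m hm => ?_⟩
    simp only [hext]
    rw [dif_pos (Nat.lt_succ_of_le hm)]
  refine le_trans (le_trans (measure_mono cover) (measure_iUnion_le _)) ?_
  unfold bdCost
  refine ENNReal.tsum_le_tsum fun v => ?_
  by_cases hv : ∀ m : Fin (n+1), v m ≠ -1
  · refine le_trans (measure_mono Set.inter_subset_right) ?_
    rw [hlaw i n (ext v)]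
    have hind : ext v 0 = v 0 := by
      simp only [hext]
      rw [dif_pos (Nat.succ_pos n)]
      exact congrArg v (Fin.ext (by simp))
    have hind' : ENNReal.ofReal (if ext v 0 = i then (1:ℝ) else 0)
        = (if v 0 = i then (1:ℝ≥0∞) else 0) := by
      rw [hind]; split_ifs <;> simp
    rw [ENNReal.ofReal_mul (by split_ifs <;> norm_num),
      ENNReal.ofReal_prod_of_nonneg (fun m _ => bdKernel_nonneg_s4 hp hq _ _), hind']
    apply le_of_eq
    congr 1
    rw [← Fin.prod_univ_eq_prod_range
      (fun m => ENNReal.ofReal (bdKernel p q (ext v m) (ext v (m+1)))) n]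
    refine Finset.prod_congr rfl fun m _ => ?_
    have e1 : ext v (m : ℕ) = v m.castSucc := by
      simp only [hext]
      rw [dif_pos (Nat.lt_succ_of_lt m.isLt)]
      exact congrArg v (Fin.ext (by simp))
    have e2 : ext v ((m : ℕ) + 1) = v m.succ := by
      simp only [hext]
      rw [dif_pos (Nat.succ_lt_succ m.isLt)]
      exact congrArg v (Fin.ext (by simp))
    rw [e1, e2, K0, if_neg (hv _)]
  · push_neg at hv
    obtain ⟨m, hm⟩ := hv
    have hempty : A ∩ {ω | ∀ m ≤ n, ω m = ext v m} = ∅ := by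
      ext ω
      simp only [Set.mem_inter_iff, Set.mem_empty_iff_false, iff_false, not_and, hA,
        Set.mem_setOf_eq]
      intro hωA hωC
      refine hωA m.val (Nat.lt_succ_iff.mp m.isLt) ?_
      rw [hωC m.val (Nat.lt_succ_iff.mp m.isLt)]
      simp only [hext]
      rw [dif_pos m.isLt]
      simpa using hm
    rw [hempty, measure_empty]
    exact zero_le

theorem stmt4' (p q : ℕ → ℝ)
    (hp : ∀ i, p i ∈ Set.Ioo (0 : ℝ) 1) (hq : ∀ i, q i ∈ Set.Ioo (0 : ℝ) 1)
    (hpq : ∀ i, p i + q i = 1)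
    (μ : ℤ → Measure (ℕ → ℤ)) (hμ : ∀ i, IsProbabilityMeasure (μ i))
    (hlaw : IsBDLaw p q μ)
    (ha : Summable (fun n : ℕ => aseq p q (n + 1))) :
    ∀ i : ℕ,
      ∫⁻ ω, (⨅ n ∈ {m : ℕ | ω m = -1}, (n : ℝ≥0∞)) ∂(μ i) < ⊤ := by
  intro i
  classical
  set A : ℕ → Set (ℕ → ℤ) := fun n => {ω | ∀ m ≤ n, ω m ≠ -1} with hA
  have hAmeas : ∀ n, MeasurableSet (A n) := by
    intro n
    have : A n = ⋂ (m : ℕ) (_ : m ≤ n), (fun ω : ℕ → ℤ => ω m) ⁻¹' ({-1}ᶜ) := by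
      ext ω; simp [hA]
    rw [this]
    exact MeasurableSet.biInter (Set.to_countable _)
      fun m _ => (measurable_pi_apply m) (measurableSet_singleton (-1)).compl
  have pt : ∀ ω : ℕ → ℤ, (⨅ n ∈ {m : ℕ | ω m = -1}, (n : ℝ≥0∞))
      ≤ ∑' n : ℕ, (A n).indicator (fun _ => (1 : ℝ≥0∞)) ω := by
    intro ω
    by_cases hhit : ∃ t : ℕ, ω t = -1
    · set t := Nat.find hhit with ht
      have h1 : (⨅ n ∈ {m : ℕ | ω m = -1}, (n : ℝ≥0∞)) ≤ (t : ℝ≥0∞) :=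
        iInf_le_of_le t (iInf_le_of_le (Nat.find_spec hhit) le_rfl)
      refine h1.trans ?_
      have h2 : ∀ n ∈ Finset.range t, (A n).indicator (fun _ => (1 : ℝ≥0∞)) ω = 1 := by
        intro n hn
        rw [Set.indicator_of_mem]
        exact fun m hm => Nat.find_min hhit (lt_of_le_of_lt hm (Finset.mem_range.mp hn))
      calc (t : ℝ≥0∞) = ∑ n ∈ Finset.range t, (A n).indicator (fun _ => (1 : ℝ≥0∞)) ω := by
            rw [Finset.sum_congr rfl h2]; simp
        _ ≤ _ := ENNReal.sum_le_tsum _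
    · push_neg at hhit
      have h3 : ∀ n, (A n).indicator (fun _ => (1 : ℝ≥0∞)) ω = 1 := fun n =>
        Set.indicator_of_mem (by exact fun m _ => hhit m) _
      rw [tsum_congr h3, ENNReal.tsum_const_eq_top_of_ne_zero one_ne_zero]
      exact le_top
  calc ∫⁻ ω, (⨅ n ∈ {m : ℕ | ω m = -1}, (n : ℝ≥0∞)) ∂(μ i)
      ≤ ∫⁻ ω, ∑' n : ℕ, (A n).indicator (fun _ => (1 : ℝ≥0∞)) ω ∂(μ i) := lintegral_mono pt
    _ = ∑' n : ℕ, ∫⁻ ω, (A n).indicator (fun _ => (1 : ℝ≥0∞)) ω ∂(μ i) :=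
        lintegral_tsum fun n => ((measurable_one (α := ℝ≥0∞)).indicator (hAmeas n)).aemeasurable
    _ = ∑' n : ℕ, μ i (A n) := tsum_congr fun n => lintegral_indicator_one (hAmeas n)
    _ ≤ ∑' n : ℕ, bdCost p q n (i : ℤ) :=
        ENNReal.tsum_le_tsum fun n => measure_noHit_le hp hq hlaw (i : ℤ) n
    _ ≤ ENNReal.ofReal (gseq p q (i : ℤ).toNat) :=
        ENNReal.tsum_le_of_sum_range_le fun N =>
          sum_bdCost_le hp hq hpq ha N (i : ℤ) (Int.ofNat_nonneg i)
    _ < ⊤ := ENNReal.ofReal_lt_top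

theorem stmt4 (p q : ℕ → ℝ)
    (hp : ∀ i, p i ∈ Set.Ioo (0 : ℝ) 1) (hq : ∀ i, q i ∈ Set.Ioo (0 : ℝ) 1)
    (hpq : ∀ i, p i + q i = 1)
    (μ : ℤ → Measure (ℕ → ℤ)) (hμ : ∀ i, IsProbabilityMeasure (μ i))
    (hlaw : IsBDLaw p q μ)
    (hc : ¬ Summable (cseq p q))
    (ha : Summable (fun n : ℕ => aseq p q (n + 1))) :
    ∀ i : ℕ,
      ∫⁻ ω, (⨅ n ∈ {m : ℕ | ω m = -1}, (n : ℝ≥0∞)) ∂(μ i) < ⊤ :=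
  stmt4' p q hp hq hpq μ hμ hlaw ha
end

section
/- If the series ∑_{n=0}^{∞} b_n converges, then for every integer i ≥ 1, the probability that the reflecting birth–death chain started at i never reaches the state 0 is μ_i({ω ∈ ℕ^ℕ : ∀ n ∈ ℕ, ω_n ≠ 0}) = (∑_{n=0}^{i−1} b_n) / (∑_{n=0}^{∞} b_n). -/
open MeasureTheory
open scoped ENNReal

/-- Transition probabilities of the reflecting birth-death chain on `ℕ`:
from `0` move to `1` with probability `1`; for `i ≥ 1`, move to `i+1` with
probability `p i` and to `i-1` with probability `q i`. -/
noncomputable def rfKernel (p q : ℕ → ℝ) : ℕ → ℕ → ℝ := fun i j =>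
  if i = 0 then (if j = 1 then 1 else 0)
  else if j = i + 1 then p i else if j = i - 1 then q i else 0

/-- `μ i` is the law (on path space, obtained via Ionescu–Tulcea) of the reflecting
birth-death chain started at `i`, characterised by its finite-dimensional (cylinder)
distributions. -/
def IsRFLaw (p q : ℕ → ℝ) (μ : ℕ → Measure (ℕ → ℕ)) : Prop :=
  ∀ (i n : ℕ) (f : ℕ → ℕ),
    μ i {ω : ℕ → ℕ | ∀ m ≤ n, ω m = f m} =
      ENNReal.ofReal ((if f 0 = i then (1 : ℝ) else 0) *
        ∏ m ∈ Finset.range n, rfKernel p q (f m) (f (m + 1)))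

/-- `bseq p q n = ∏_{i=1}^{n} q_i / p_i` (so `bseq p q 0 = 1`). -/
noncomputable def bseq (p q : ℕ → ℝ) (n : ℕ) : ℝ :=
  ∏ i ∈ Finset.Icc 1 n, q i / p i

namespace Stmt5Aux

open Finset

/-- Cylinder set. -/
def cyl (n : ℕ) (f : ℕ → ℕ) : Set (ℕ → ℕ) := {ω | ∀ m ≤ n, ω m = f m}

/-- survival event up to time n -/
def A (n : ℕ) : Set (ℕ → ℕ) := {ω | ∀ m ≤ n, ω m ≠ 0}

/-- tail event with prescribed values -/
def tailE (n r : ℕ) (t : ℕ → ℕ) : Set (ℕ → ℕ) := {ω | ∀ l ≤ r, ω (n + l) = t l}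

noncomputable def W (p q : ℕ → ℝ) (i n : ℕ) (f : ℕ → ℕ) : ℝ≥0∞ :=
  ENNReal.ofReal ((if f 0 = i then (1 : ℝ) else 0) *
    ∏ m ∈ Finset.range n, rfKernel p q (f m) (f (m + 1)))

def PathT (n j : ℕ) : Type :=
  {f : ℕ → ℕ // (∀ m ≤ n, f m ≠ 0) ∧ f n = j ∧ ∀ m, n < m → f m = 0}

instance (n j : ℕ) : Countable (PathT n j) := by
  have hinj : Function.Injective (fun F : PathT n j => (fun m : Fin (n + 1) => F.1 m)) := by
    rintro ⟨f, hf⟩ ⟨g, hg⟩ h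
    apply Subtype.ext
    show f = g
    funext m
    by_cases hm : m ≤ n
    · exact congrFun h ⟨m, Nat.lt_succ_of_le hm⟩
    · rw [hf.2.2 m (Nat.lt_of_not_le hm), hg.2.2 m (Nat.lt_of_not_le hm)]
  exact hinj.countable

lemma measurable_cyl (n : ℕ) (f : ℕ → ℕ) : MeasurableSet (cyl n f) := by
  have : cyl n f = ⋂ m ∈ Set.Iic n, (fun ω : ℕ → ℕ => ω m) ⁻¹' {f m} := by
    ext ω; simp [cyl]
  rw [this]
  exact MeasurableSet.biInter (Set.to_countable _)
    (fun m _ => (measurable_pi_apply m) (measurableSet_singleton _))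

lemma measurable_A (n : ℕ) : MeasurableSet (A n) := by
  have : A n = ⋂ m ∈ Set.Iic n, (fun ω : ℕ → ℕ => ω m) ⁻¹' ({0}ᶜ) := by
    ext ω; simp [A]
  rw [this]
  exact MeasurableSet.biInter (Set.to_countable _)
    (fun m _ => (measurable_pi_apply m) (measurableSet_singleton _).compl)

lemma measurable_tailE (n r : ℕ) (t : ℕ → ℕ) : MeasurableSet (tailE n r t) := by
  have : tailE n r t = ⋂ l ∈ Set.Iic r, (fun ω : ℕ → ℕ => ω (n + l)) ⁻¹' {t l} := by
    ext ω; simp [tailE]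
  rw [this]
  exact MeasurableSet.biInter (Set.to_countable _)
    (fun m _ => (measurable_pi_apply _) (measurableSet_singleton _))

/-- extension of a path by prescribed tail values -/
def extSeq (n : ℕ) (t : ℕ → ℕ) (f : ℕ → ℕ) : ℕ → ℕ := fun m =>
  if m ≤ n then f m else t (m - n)

lemma unionB (n r : ℕ) (t : ℕ → ℕ) :
    A n ∩ tailE n r t = ⋃ F : PathT n (t 0), cyl (n + r) (extSeq n t F.1) := by
  ext ω
  constructor
  · rintro ⟨hA, hT⟩
    refine Set.mem_iUnion.2 ⟨⟨fun m => if m ≤ n then ω m else 0, ?_, ?_, ?_⟩, ?_⟩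
    · intro m hm; simpa [hm] using hA m hm
    · simpa using (hT 0 (Nat.zero_le r)).symm ▸ rfl
    · intro m hm; simp [Nat.not_le.2 hm]
    · intro m hm
      simp only [extSeq]
      by_cases hmn : m ≤ n
      · simp [hmn]
      · have h1 : n < m := Nat.lt_of_not_le hmn
        have h2 : m - n ≤ r := by omega
        have h3 : m = n + (m - n) := by omega
        simp only [hmn, if_false]
        have h4 := hT (m - n) h2
        rw [← h3] at h4; exact h4
  · intro hω
    obtain ⟨⟨f, hf1, hf2, hf3⟩, hω⟩ := Set.mem_iUnion.1 hω
    constructor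
    · intro m hm
      have := hω m (le_trans hm (Nat.le_add_right n r))
      simp only [extSeq, hm, if_true] at this
      rw [this]; exact hf1 m hm
    · intro l hl
      have := hω (n + l) (by omega)
      rcases Nat.eq_zero_or_pos l with hl0 | hl0
      · subst hl0
        simp only [extSeq, Nat.add_zero, le_refl, if_true] at this
        simpa using this.trans hf2
      · have hnl : ¬ (n + l ≤ n) := by omega
        simp only [extSeq, hnl, if_false, Nat.add_sub_cancel_left] at this
        exact this

lemma disjB (n r : ℕ) (t : ℕ → ℕ) :
    Pairwise (Function.onFun Disjoint fun F : PathT n (t 0) => cyl (n + r) (extSeq n t F.1)) := by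
  rintro ⟨f, hf⟩ ⟨g, hg⟩ hne
  have : ∃ m, m ≤ n ∧ f m ≠ g m := by
    by_contra hcon
    push_neg at hcon
    apply hne
    apply Subtype.ext
    show f = g
    funext m
    by_cases hm : m ≤ n
    · exact hcon m hm
    · rw [hf.2.2 m (Nat.lt_of_not_le hm), hg.2.2 m (Nat.lt_of_not_le hm)]
  obtain ⟨m, hm, hfg⟩ := this
  rw [Function.onFun, Set.disjoint_left]
  intro ω h1 h2
  have e1 := h1 m (le_trans hm (Nat.le_add_right n r))
  have e2 := h2 m (le_trans hm (Nat.le_add_right n r))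
  simp only [extSeq, hm, if_true] at e1 e2
  exact hfg (e1 ▸ e2 ▸ rfl)

end Stmt5Aux

namespace Stmt5Aux

open Finset

lemma rfKernel_nonneg {p q : ℕ → ℝ} (hp : ∀ i, 1 ≤ i → p i ∈ Set.Ioo (0:ℝ) 1)
    (hq : ∀ i, 1 ≤ i → q i ∈ Set.Ioo (0:ℝ) 1) (a b : ℕ) : 0 ≤ rfKernel p q a b := by
  by_cases h : a = 0
  · simp only [rfKernel, h, if_true]; split_ifs <;> norm_num
  · have h1 := (hp a (Nat.one_le_iff_ne_zero.2 h)).1.le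
    have h2 := (hq a (Nat.one_le_iff_ne_zero.2 h)).1.le
    simp only [rfKernel, h, if_false]
    split_ifs <;> first | exact h1 | exact h2 | norm_num

lemma wre_nonneg {p q : ℕ → ℝ} (hp : ∀ i, 1 ≤ i → p i ∈ Set.Ioo (0:ℝ) 1)
    (hq : ∀ i, 1 ≤ i → q i ∈ Set.Ioo (0:ℝ) 1) (i n : ℕ) (f : ℕ → ℕ) :
    0 ≤ (if f 0 = i then (1:ℝ) else 0) * ∏ m ∈ Finset.range n, rfKernel p q (f m) (f (m + 1)) := by
  apply mul_nonneg
  · split_ifs <;> norm_num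
  · exact Finset.prod_nonneg fun m _ => rfKernel_nonneg hp hq _ _

lemma W_ext {p q : ℕ → ℝ} (hp : ∀ i, 1 ≤ i → p i ∈ Set.Ioo (0:ℝ) 1)
    (hq : ∀ i, 1 ≤ i → q i ∈ Set.Ioo (0:ℝ) 1) (i n r : ℕ) (t : ℕ → ℕ) (F : PathT n (t 0)) :
    W p q i (n + r) (extSeq n t F.1) =
      W p q i n F.1 * ENNReal.ofReal (∏ l ∈ Finset.range r, rfKernel p q (t l) (t (l + 1))) := by
  obtain ⟨f, hf1, hf2, hf3⟩ := F
  simp only [W, extSeq]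
  rw [Finset.prod_range_add]
  have e1 : ∀ m ∈ Finset.range n,
      rfKernel p q (if m ≤ n then f m else t (m - n))
        (if m + 1 ≤ n then f (m + 1) else t (m + 1 - n)) = rfKernel p q (f m) (f (m + 1)) := by
    intro m hm
    have hm' : m < n := Finset.mem_range.1 hm
    rw [if_pos hm'.le, if_pos (by omega : m + 1 ≤ n)]
  have e2 : ∀ l ∈ Finset.range r,
      rfKernel p q (if n + l ≤ n then f (n + l) else t (n + l - n))
        (if n + l + 1 ≤ n then f (n + l + 1) else t (n + l + 1 - n)) =
        rfKernel p q (t l) (t (l + 1)) := by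
    intro l _
    have hA : (if n + l ≤ n then f (n + l) else t (n + l - n)) = t l := by
      rcases Nat.eq_zero_or_pos l with h | h
      · subst h; simpa using hf2
      · rw [if_neg (by omega)]; congr 1; omega
    have hB : (if n + l + 1 ≤ n then f (n + l + 1) else t (n + l + 1 - n)) = t (l + 1) := by
      rw [if_neg (by omega)]; congr 1; omega
    rw [hA, hB]
  rw [Finset.prod_congr rfl e1, Finset.prod_congr rfl e2]
  have h0 : (if (0:ℕ) ≤ n then f 0 else t (0 - n)) = f 0 := by simp
  rw [h0, ← mul_assoc, ENNReal.ofReal_mul (wre_nonneg hp hq i n f)]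

lemma measB {p q : ℕ → ℝ} (hp : ∀ i, 1 ≤ i → p i ∈ Set.Ioo (0:ℝ) 1)
    (hq : ∀ i, 1 ≤ i → q i ∈ Set.Ioo (0:ℝ) 1)
    (μ : ℕ → MeasureTheory.Measure (ℕ → ℕ)) (hlaw : IsRFLaw p q μ)
    (i n r : ℕ) (t : ℕ → ℕ) :
    μ i (A n ∩ tailE n r t) =
      (∑' F : PathT n (t 0), W p q i n F.1) *
        ENNReal.ofReal (∏ l ∈ Finset.range r, rfKernel p q (t l) (t (l + 1))) := by
  rw [unionB n r t, MeasureTheory.measure_iUnion (disjB n r t) (fun F => measurable_cyl _ _),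
    ← ENNReal.tsum_mul_right]
  refine tsum_congr fun F => ?_
  rw [show μ i (cyl (n + r) (extSeq n t F.1)) = W p q i (n + r) (extSeq n t F.1) from
    hlaw i (n + r) (extSeq n t F.1), W_ext hp hq i n r t F]

end Stmt5Aux

namespace Stmt5Aux

open Finset MeasureTheory

noncomputable def G (μ : ℕ → Measure (ℕ → ℕ)) (i n j : ℕ) : ℝ≥0∞ :=
  μ i (A n ∩ {ω : ℕ → ℕ | ω n = j})

lemma tailE_zero (n j : ℕ) : tailE n 0 (fun _ => j) = {ω : ℕ → ℕ | ω n = j} := by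
  ext ω; simp [tailE, Nat.le_zero]

variable {p q : ℕ → ℝ} {μ : ℕ → Measure (ℕ → ℕ)}

lemma G_eq (hp : ∀ i, 1 ≤ i → p i ∈ Set.Ioo (0:ℝ) 1) (hq : ∀ i, 1 ≤ i → q i ∈ Set.Ioo (0:ℝ) 1)
    (hlaw : IsRFLaw p q μ) (i n j : ℕ) :
    G μ i n j = ∑' F : PathT n j, W p q i n F.1 := by
  have h := measB hp hq μ hlaw i n 0 (fun _ => j)
  simpa [G, tailE_zero, Finset.prod_range_zero] using h

lemma measB' (hp : ∀ i, 1 ≤ i → p i ∈ Set.Ioo (0:ℝ) 1) (hq : ∀ i, 1 ≤ i → q i ∈ Set.Ioo (0:ℝ) 1)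
    (hlaw : IsRFLaw p q μ) (i n r : ℕ) (t : ℕ → ℕ) :
    μ i (A n ∩ tailE n r t) =
      G μ i n (t 0) * ENNReal.ofReal (∏ l ∈ Finset.range r, rfKernel p q (t l) (t (l + 1))) := by
  rw [measB hp hq μ hlaw i n r t, ← G_eq hp hq hlaw i n (t 0)]

lemma G_zero' (i n : ℕ) : G μ i n 0 = 0 := by
  have h : A n ∩ {ω : ℕ → ℕ | ω n = 0} = ∅ := by
    ext ω
    simp only [Set.mem_inter_iff, Set.mem_empty_iff_false, iff_false, not_and]
    intro hA h0
    exact hA n le_rfl h0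
  simp [G, h]

lemma tsum_G (i n : ℕ) : ∑' j, G μ i n j = μ i (A n) := by
  have hU : ⋃ j, (A n ∩ {ω : ℕ → ℕ | ω n = j}) = A n := by
    have h : (⋃ j, {ω : ℕ → ℕ | ω n = j}) = Set.univ := by
      ext ω
      simp only [Set.mem_iUnion, Set.mem_setOf_eq, Set.mem_univ, iff_true]
      exact ⟨ω n, rfl⟩
    rw [← Set.inter_iUnion, h, Set.inter_univ]
  rw [← hU]
  refine (MeasureTheory.measure_iUnion ?_ ?_).symm
  · intro j k hjk
    rw [Function.onFun, Set.disjoint_left]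
    rintro ω ⟨_, h1⟩ ⟨_, h2⟩
    exact hjk (h1 ▸ h2 ▸ rfl)
  · intro j
    have hset : {ω : ℕ → ℕ | ω n = j} = (fun ω : ℕ → ℕ => ω n) ⁻¹' {j} := by
      ext ω; simp
    rw [hset]
    exact (measurable_A n).inter ((measurable_pi_apply n) (measurableSet_singleton j))

lemma G_succ (hp : ∀ i, 1 ≤ i → p i ∈ Set.Ioo (0:ℝ) 1) (hq : ∀ i, 1 ≤ i → q i ∈ Set.Ioo (0:ℝ) 1)
    (hlaw : IsRFLaw p q μ) (i n j : ℕ) (hj : j ≠ 0) :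
    G μ i (n + 1) j = ∑' k, G μ i n k * ENNReal.ofReal (rfKernel p q k j) := by
  have hU : A (n + 1) ∩ {ω : ℕ → ℕ | ω (n + 1) = j}
      = ⋃ k, (A n ∩ tailE n 1 (fun l => if l = 0 then k else j)) := by
    ext ω
    simp only [Set.mem_iUnion, Set.mem_inter_iff, Set.mem_setOf_eq, A, tailE]
    constructor
    · rintro ⟨hA, hω⟩
      refine ⟨ω n, fun m hm => hA m (le_trans hm (Nat.le_succ n)), ?_⟩
      intro l hl
      interval_cases l
      · simp
      · simpa using hω
    · rintro ⟨k, hA, hT⟩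
      have h1 := hT 1 le_rfl
      simp only [Nat.one_ne_zero, if_false] at h1
      refine ⟨fun m hm => ?_, h1⟩
      rcases Nat.lt_or_ge m (n + 1) with h | h
      · exact hA m (by omega)
      · have hm1 : m = n + 1 := by omega
        rw [hm1, h1]; exact hj
  have hG : G μ i (n + 1) j = μ i (A (n + 1) ∩ {ω : ℕ → ℕ | ω (n + 1) = j}) := rfl
  rw [hG, hU, MeasureTheory.measure_iUnion ?_ ?_]
  · refine tsum_congr fun k => ?_
    rw [measB' hp hq hlaw i n 1 (fun l => if l = 0 then k else j)]
    congr 1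
    simp [Finset.prod_range_one]
  · intro k k' hkk
    rw [Function.onFun, Set.disjoint_left]
    intro ω h1 h2
    have e1 : ω n = k := by simpa using h1.2 0 (Nat.zero_le 1)
    have e2 : ω n = k' := by simpa using h2.2 0 (Nat.zero_le 1)
    exact hkk (e1.symm.trans e2)
  · exact fun k => (measurable_A n).inter (measurable_tailE _ _ _)

lemma G_descent (hp : ∀ i, 1 ≤ i → p i ∈ Set.Ioo (0:ℝ) 1) (hq : ∀ i, 1 ≤ i → q i ∈ Set.Ioo (0:ℝ) 1)
    (hlaw : IsRFLaw p q μ) (i n j : ℕ) (hj : 1 ≤ j) :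
    μ i (A n ∩ tailE n j (fun l => j - l)) =
      G μ i n j * ENNReal.ofReal (∏ l ∈ Finset.range j, q (l + 1)) := by
  rw [measB' hp hq hlaw i n j (fun l => j - l)]
  congr 1
  refine congrArg ENNReal.ofReal ?_
  calc ∏ l ∈ Finset.range j, rfKernel p q (j - l) (j - (l + 1))
      = ∏ l ∈ Finset.range j, q (j - l) := by
        refine Finset.prod_congr rfl fun l hl => ?_
        have hl' : l < j := Finset.mem_range.1 hl
        have ha : ¬ (j - l = 0) := by omega
        simp only [rfKernel, ha, if_false]
        rw [if_neg (by omega), if_pos (by omega)]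
    _ = ∏ l ∈ Finset.range j, q (l + 1) := by
        conv_rhs => rw [← Finset.prod_range_reflect (fun l => q (l + 1)) j]
        refine Finset.prod_congr rfl fun l hl => ?_
        have hl' : l < j := Finset.mem_range.1 hl
        congr 1
        omega

lemma descent_ineq (hp : ∀ i, 1 ≤ i → p i ∈ Set.Ioo (0:ℝ) 1)
    (hq : ∀ i, 1 ≤ i → q i ∈ Set.Ioo (0:ℝ) 1)
    (hlaw : IsRFLaw p q μ) (i n K : ℕ) :
    μ i (A (n + K)) + (∑ j ∈ Finset.Icc 1 K, G μ i n j) *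
      ENNReal.ofReal (∏ l ∈ Finset.range K, q (l + 1)) ≤ μ i (A n) := by
  have hEmeas : ∀ j : ℕ, MeasurableSet (A n ∩ tailE n j (fun l => j - l)) :=
    fun j => (measurable_A n).inter (measurable_tailE _ _ _)
  have hmemn : ∀ j : ℕ, ∀ ω ∈ A n ∩ tailE n j (fun l => j - l), ω n = j := by
    intro j ω hω
    have h := hω.2 0 (Nat.zero_le j)
    simpa using h
  have hdisj : (↑(Finset.Icc 1 K) : Set ℕ).Pairwise
      (Function.onFun Disjoint fun j => A n ∩ tailE n j (fun l => j - l)) := by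
    intro j _ k _ hjk
    rw [Function.onFun, Set.disjoint_left]
    intro ω h1 h2
    exact hjk ((hmemn j ω h1).symm.trans (hmemn k ω h2))
  have hsum : μ i (⋃ j ∈ Finset.Icc 1 K, (A n ∩ tailE n j (fun l => j - l)))
      = ∑ j ∈ Finset.Icc 1 K, μ i (A n ∩ tailE n j (fun l => j - l)) :=
    MeasureTheory.measure_biUnion_finset hdisj (fun j _ => hEmeas j)
  have hdisj2 : Disjoint (A (n + K))
      (⋃ j ∈ Finset.Icc 1 K, (A n ∩ tailE n j (fun l => j - l))) := by
    rw [Set.disjoint_left]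
    intro ω h1 h2
    simp only [Set.mem_iUnion] at h2
    obtain ⟨j, hj, hω⟩ := h2
    have hj' := Finset.mem_Icc.1 hj
    have h0 : ω (n + j) = 0 := by
      have h := hω.2 j le_rfl
      simpa using h
    exact h1 (n + j) (by omega) h0
  have hunion : μ i (A (n + K)) + ∑ j ∈ Finset.Icc 1 K, μ i (A n ∩ tailE n j (fun l => j - l))
      ≤ μ i (A n) := by
    rw [← hsum, ← MeasureTheory.measure_union hdisj2
      (Finset.measurableSet_biUnion _ (fun j _ => hEmeas j))]
    apply MeasureTheory.measure_mono
    apply Set.union_subset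
    · intro ω hω m hm
      exact hω m (by omega)
    · intro ω hω
      simp only [Set.mem_iUnion] at hω
      obtain ⟨j, _, hω⟩ := hω
      exact hω.1
  refine le_trans (add_le_add le_rfl ?_) hunion
  rw [Finset.sum_mul]
  apply Finset.sum_le_sum
  intro j hj
  obtain ⟨hj1, hj2⟩ := Finset.mem_Icc.1 hj
  rw [G_descent hp hq hlaw i n j hj1]
  apply mul_le_mul_right
  apply ENNReal.ofReal_le_ofReal
  have hKj : K = j + (K - j) := by omega
  conv_lhs => rw [hKj, Finset.prod_range_add]
  apply mul_le_of_le_one_right (Finset.prod_nonneg fun l _ => (hq _ (by omega)).1.le)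
  exact Finset.prod_le_one (fun l _ => (hq _ (by omega)).1.le) (fun l _ => (hq _ (by omega)).2.le)

end Stmt5Aux

namespace Stmt5Aux

open Finset MeasureTheory

variable {p q : ℕ → ℝ} {μ : ℕ → Measure (ℕ → ℕ)}

lemma bseq_pos (hp : ∀ i, 1 ≤ i → p i ∈ Set.Ioo (0:ℝ) 1) (hq : ∀ i, 1 ≤ i → q i ∈ Set.Ioo (0:ℝ) 1)
    (n : ℕ) : 0 < bseq p q n := by
  refine Finset.prod_pos fun i hi => ?_
  have h1 : 1 ≤ i := (Finset.mem_Icc.1 hi).1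
  exact div_pos (hq i h1).1 (hp i h1).1

lemma bseq_rec (hp : ∀ i, 1 ≤ i → p i ∈ Set.Ioo (0:ℝ) 1) (k : ℕ) (hk : 1 ≤ k) :
    p k * bseq p q k = q k * bseq p q (k - 1) := by
  obtain ⟨m, rfl⟩ : ∃ m, k = m + 1 := ⟨k - 1, by omega⟩
  unfold bseq
  rw [Finset.prod_Icc_succ_top (by omega : 1 ≤ m + 1)]
  have hpk := (hp (m + 1) hk).1.ne'
  simp only [Nat.add_sub_cancel]
  rw [show p (m + 1) * ((∏ x ∈ Finset.Icc 1 m, q x / p x) * (q (m + 1) / p (m + 1)))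
      = (p (m + 1) / p (m + 1)) * (q (m + 1) * ∏ x ∈ Finset.Icc 1 m, q x / p x) from by ring,
    div_self hpk, one_mul]

lemma Sp_harm (hp : ∀ i, 1 ≤ i → p i ∈ Set.Ioo (0:ℝ) 1)
    (hpq : ∀ i, 1 ≤ i → p i + q i = 1) (k : ℕ) (hk : 1 ≤ k) :
    q k * (∑ m ∈ Finset.range (k - 1), bseq p q m) +
      p k * (∑ m ∈ Finset.range (k + 1), bseq p q m) = ∑ m ∈ Finset.range k, bseq p q m := by
  obtain ⟨m, rfl⟩ : ∃ m, k = m + 1 := ⟨k - 1, by omega⟩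
  have h1 : ∑ l ∈ Finset.range (m + 2), bseq p q l
      = (∑ l ∈ Finset.range (m + 1), bseq p q l) + bseq p q (m + 1) :=
    Finset.sum_range_succ _ _
  have h2 : ∑ l ∈ Finset.range (m + 1), bseq p q l
      = (∑ l ∈ Finset.range m, bseq p q l) + bseq p q m := Finset.sum_range_succ _ _
  have h3 : p (m + 1) * bseq p q (m + 1) = q (m + 1) * bseq p q m := by
    have := bseq_rec (q := q) hp (m + 1) hk
    simpa using this
  have h4 := hpq (m + 1) hk
  simp only [Nat.add_sub_cancel]
  linear_combination p (m + 1) * h1 + (- q (m + 1)) * h2 + h3 +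
    (∑ l ∈ Finset.range (m + 1), bseq p q l) * h4

end Stmt5Aux

namespace Stmt5Aux

open Finset MeasureTheory

noncomputable def hfun (p q : ℕ → ℝ) (j : ℕ) : ℝ≥0∞ :=
  ENNReal.ofReal ((∑ m ∈ Finset.range j, bseq p q m) / (∑' m, bseq p q m))

variable {p q : ℕ → ℝ} {μ : ℕ → Measure (ℕ → ℕ)}

lemma S_pos (hp : ∀ i, 1 ≤ i → p i ∈ Set.Ioo (0:ℝ) 1)
    (hq : ∀ i, 1 ≤ i → q i ∈ Set.Ioo (0:ℝ) 1) (hb : Summable (bseq p q)) :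
    0 < ∑' m, bseq p q m :=
  Summable.tsum_pos hb (fun m => (bseq_pos hp hq m).le) 0 (bseq_pos hp hq 0)

lemma Sp_nonneg (hp : ∀ i, 1 ≤ i → p i ∈ Set.Ioo (0:ℝ) 1)
    (hq : ∀ i, 1 ≤ i → q i ∈ Set.Ioo (0:ℝ) 1) (j : ℕ) :
    0 ≤ ∑ m ∈ Finset.range j, bseq p q m :=
  Finset.sum_nonneg fun m _ => (bseq_pos hp hq m).le

lemma hfun_zero : hfun p q 0 = 0 := by simp [hfun]

lemma hfun_le_one (hp : ∀ i, 1 ≤ i → p i ∈ Set.Ioo (0:ℝ) 1)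
    (hq : ∀ i, 1 ≤ i → q i ∈ Set.Ioo (0:ℝ) 1) (hb : Summable (bseq p q)) (j : ℕ) :
    hfun p q j ≤ 1 := by
  rw [hfun, ← ENNReal.ofReal_one]
  apply ENNReal.ofReal_le_ofReal
  rw [div_le_one (S_pos hp hq hb)]
  exact Summable.sum_le_tsum _ (fun m _ => (bseq_pos hp hq m).le) hb

lemma harm (hp : ∀ i, 1 ≤ i → p i ∈ Set.Ioo (0:ℝ) 1)
    (hq : ∀ i, 1 ≤ i → q i ∈ Set.Ioo (0:ℝ) 1)
    (hpq : ∀ i, 1 ≤ i → p i + q i = 1) (hb : Summable (bseq p q)) (k : ℕ) (hk : k ≠ 0) :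
    ∑' j, hfun p q j * ENNReal.ofReal (rfKernel p q k j) = hfun p q k := by
  have hk1 : 1 ≤ k := Nat.one_le_iff_ne_zero.2 hk
  have hS := S_pos hp hq hb
  have hnn : ∀ j : ℕ, 0 ≤ (∑ m ∈ Finset.range j, bseq p q m) / (∑' m, bseq p q m) :=
    fun j => div_nonneg (Sp_nonneg hp hq j) hS.le
  rw [tsum_eq_sum (s := ({k - 1, k + 1} : Finset ℕ)) ?_]
  · rw [Finset.sum_insert (by simp only [Finset.mem_singleton]; omega), Finset.sum_singleton]
    have e1 : rfKernel p q k (k - 1) = q k := by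
      simp only [rfKernel, hk, if_false]
      rw [if_neg (by omega)]
      simp
    have e2 : rfKernel p q k (k + 1) = p k := by
      simp only [rfKernel, hk, if_false]
      simp
    rw [e1, e2]
    unfold hfun
    rw [← ENNReal.ofReal_mul (hnn _), ← ENNReal.ofReal_mul (hnn _),
      ← ENNReal.ofReal_add (mul_nonneg (hnn _) (hq k hk1).1.le)
        (mul_nonneg (hnn _) (hp k hk1).1.le)]
    congr 1
    rw [div_mul_eq_mul_div, div_mul_eq_mul_div, ← add_div]
    have hh := Sp_harm hp hpq k hk1
    congr 1
    linear_combination hh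
  · intro j hj
    simp only [Finset.mem_insert, Finset.mem_singleton] at hj
    push_neg at hj
    have h0 : rfKernel p q k j = 0 := by
      simp only [rfKernel, hk, if_false]
      rw [if_neg hj.2, if_neg hj.1]
    simp [h0]

lemma invariant (hp : ∀ i, 1 ≤ i → p i ∈ Set.Ioo (0:ℝ) 1)
    (hq : ∀ i, 1 ≤ i → q i ∈ Set.Ioo (0:ℝ) 1)
    (hpq : ∀ i, 1 ≤ i → p i + q i = 1) (hlaw : IsRFLaw p q μ)
    (hb : Summable (bseq p q)) (i : ℕ) (hi : 1 ≤ i) (n : ℕ) :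
    ∑' j, hfun p q j * G μ i n j = hfun p q i := by
  induction n with
  | zero =>
    have hG0 : ∀ j, G μ i 0 j = if j = i then 1 else 0 := by
      intro j
      by_cases hj : j = 0
      · subst hj
        rw [G_zero', if_neg (by omega)]
      · have hset : A 0 ∩ {ω : ℕ → ℕ | ω 0 = j}
            = {ω : ℕ → ℕ | ∀ m ≤ 0, ω m = (fun _ => j) m} := by
          ext ω
          constructor
          · rintro ⟨_, h2⟩ m hm
            rw [Nat.le_zero.1 hm]
            exact h2
          · intro h
            refine ⟨fun m hm => ?_, h 0 le_rfl⟩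
            rw [Nat.le_zero.1 hm, h 0 le_rfl]
            exact hj
        rw [show G μ i 0 j = μ i (A 0 ∩ {ω : ℕ → ℕ | ω 0 = j}) from rfl, hset,
          hlaw i 0 (fun _ => j)]
        simp only [Finset.prod_range_zero, mul_one]
        split_ifs <;> simp
    rw [tsum_eq_single i ?_]
    · rw [hG0 i, if_pos rfl, mul_one]
    · intro j hj
      rw [hG0 j, if_neg hj, mul_zero]
  | succ n ih =>
    calc ∑' j, hfun p q j * G μ i (n + 1) j
        = ∑' j, ∑' k, hfun p q j * (G μ i n k * ENNReal.ofReal (rfKernel p q k j)) := by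
          refine tsum_congr fun j => ?_
          by_cases hj : j = 0
          · subst hj
            simp [hfun_zero]
          · rw [G_succ hp hq hlaw i n j hj, ENNReal.tsum_mul_left]
      _ = ∑' k, ∑' j, hfun p q j * (G μ i n k * ENNReal.ofReal (rfKernel p q k j)) :=
          ENNReal.tsum_comm
      _ = ∑' k, G μ i n k * ∑' j, hfun p q j * ENNReal.ofReal (rfKernel p q k j) := by
          refine tsum_congr fun k => ?_
          rw [← ENNReal.tsum_mul_left]
          refine tsum_congr fun j => by ring
      _ = ∑' k, hfun p q k * G μ i n k := by
          refine tsum_congr fun k => ?_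
          by_cases hk : k = 0
          · subst hk
            rw [G_zero']
            simp
          · rw [harm hp hq hpq hb k hk]
            ring
      _ = hfun p q i := ih

end Stmt5Aux

open Filter

theorem stmt5 (p q : ℕ → ℝ)
    (hp : ∀ i, 1 ≤ i → p i ∈ Set.Ioo (0 : ℝ) 1) (hq : ∀ i, 1 ≤ i → q i ∈ Set.Ioo (0 : ℝ) 1)
    (hpq : ∀ i, 1 ≤ i → p i + q i = 1) (hp0 : p 0 = 1)
    (μ : ℕ → Measure (ℕ → ℕ)) (hμ : ∀ i, IsProbabilityMeasure (μ i))
    (hlaw : IsRFLaw p q μ)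
    (hb : Summable (bseq p q)) :
    ∀ i : ℕ, 1 ≤ i →
      μ i {ω : ℕ → ℕ | ∀ n : ℕ, ω n ≠ 0} =
        ENNReal.ofReal ((∑ n ∈ Finset.range i, bseq p q n) / (∑' n : ℕ, bseq p q n)) := by
  intro i hi
  classical
  open Stmt5Aux in
  have hAint : (⋂ n, Stmt5Aux.A n) = {ω : ℕ → ℕ | ∀ n, ω n ≠ 0} := by
    ext ω
    constructor
    · intro h n
      exact (Set.mem_iInter.1 h n) n le_rfl
    · intro h
      exact Set.mem_iInter.2 fun n m _ => h m
  have hanti : Antitone Stmt5Aux.A := by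
    intro a b hab ω hω m hm
    exact hω m (le_trans hm hab)
  have hlim : Tendsto (fun n => μ i (Stmt5Aux.A n)) atTop
      (nhds (μ i {ω : ℕ → ℕ | ∀ n, ω n ≠ 0})) := by
    have h := MeasureTheory.tendsto_measure_iInter_atTop (μ := μ i)
      (fun n => (Stmt5Aux.measurable_A n).nullMeasurableSet) hanti
      ⟨0, MeasureTheory.measure_ne_top _ _⟩
    rw [hAint] at h
    exact h
  set L := μ i {ω : ℕ → ℕ | ∀ n, ω n ≠ 0} with hL
  suffices hmain : L = Stmt5Aux.hfun p q i by exact hmain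
  have hSpos := Stmt5Aux.S_pos hp hq hb
  -- lower bound
  have hlow : ∀ n, Stmt5Aux.hfun p q i ≤ μ i (Stmt5Aux.A n) := by
    intro n
    rw [← Stmt5Aux.invariant hp hq hpq hlaw hb i hi n, ← Stmt5Aux.tsum_G i n]
    refine Summable.tsum_le_tsum (fun j => ?_) ENNReal.summable ENNReal.summable
    calc Stmt5Aux.hfun p q j * Stmt5Aux.G μ i n j
        ≤ 1 * Stmt5Aux.G μ i n j := mul_le_mul_left (Stmt5Aux.hfun_le_one hp hq hb j) _
      _ = Stmt5Aux.G μ i n j := one_mul _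
  have hlower : Stmt5Aux.hfun p q i ≤ L := ge_of_tendsto hlim (Eventually.of_forall hlow)
  -- upper bound for each ε
  have hupper : ∀ ε : ℝ, 0 < ε → ε < 1 → L * ENNReal.ofReal (1 - ε) ≤ Stmt5Aux.hfun p q i := by
    intro ε hε hε1
    have hεopen : (0:ℝ) < 1 - ε := by linarith
    have hne0 : ENNReal.ofReal (1 - ε) ≠ 0 := (ENNReal.ofReal_pos.2 hεopen).ne'
    have hnetop : ENNReal.ofReal (1 - ε) ≠ ⊤ := ENNReal.ofReal_ne_top
    -- choose K0
    have htendS : Tendsto (fun K => ∑ m ∈ Finset.range K, bseq p q m) atTop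
        (nhds (∑' m, bseq p q m)) := hb.hasSum.tendsto_sum_nat
    have hlt : (1 - ε) * (∑' m, bseq p q m) < ∑' m, bseq p q m := by nlinarith
    obtain ⟨K0, hK0⟩ := (htendS.eventually (eventually_gt_nhds hlt)).exists
    have hge : ∀ j, K0 ≤ j → ENNReal.ofReal (1 - ε) ≤ Stmt5Aux.hfun p q j := by
      intro j hj
      apply ENNReal.ofReal_le_ofReal
      rw [le_div_iff₀ hSpos]
      calc (1 - ε) * (∑' m, bseq p q m) ≤ ∑ m ∈ Finset.range K0, bseq p q m := hK0.le
        _ ≤ ∑ m ∈ Finset.range j, bseq p q m :=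
            Finset.sum_le_sum_of_subset_of_nonneg (Finset.range_subset_range.2 hj)
              (fun m _ _ => (Stmt5Aux.bseq_pos hp hq m).le)
    have htail : ∀ n, (∑' j, Stmt5Aux.G μ i n (j + K0)) * ENNReal.ofReal (1 - ε)
        ≤ Stmt5Aux.hfun p q i := by
      intro n
      rw [← ENNReal.tsum_mul_right]
      calc ∑' j, Stmt5Aux.G μ i n (j + K0) * ENNReal.ofReal (1 - ε)
          ≤ ∑' j, Stmt5Aux.hfun p q (j + K0) * Stmt5Aux.G μ i n (j + K0) := by
            refine Summable.tsum_le_tsum (fun j => ?_) ENNReal.summable ENNReal.summable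
            rw [mul_comm]
            exact mul_le_mul_left (hge _ (by omega)) _
        _ ≤ ∑' j, Stmt5Aux.hfun p q j * Stmt5Aux.G μ i n j :=
            ENNReal.tsum_comp_le_tsum_of_injective (add_left_injective K0) _
        _ = Stmt5Aux.hfun p q i := Stmt5Aux.invariant hp hq hpq hlaw hb i hi n
    have hsplit : ∀ n, μ i (Stmt5Aux.A n) ≤ (∑ j ∈ Finset.Icc 1 K0, Stmt5Aux.G μ i n j)
        + Stmt5Aux.hfun p q i / ENNReal.ofReal (1 - ε) := by
      intro n
      rw [← Stmt5Aux.tsum_G i n,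
        ← Summable.sum_add_tsum_nat_add' (f := fun j => Stmt5Aux.G μ i n j) (k := K0) ENNReal.summable]
      apply add_le_add
      · rw [← Finset.sum_erase (Finset.range K0) (Stmt5Aux.G_zero' i n)]
        apply Finset.sum_le_sum_of_subset
        intro j hj
        simp only [Finset.mem_erase, Finset.mem_range] at hj
        simp only [Finset.mem_Icc]
        omega
      · rw [ENNReal.le_div_iff_mul_le (Or.inl hne0) (Or.inl hnetop)]
        exact htail n
    set c := ENNReal.ofReal (∏ l ∈ Finset.range K0, q (l + 1)) with hc
    have hcpos : c ≠ 0 := by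
      rw [hc]
      refine (ENNReal.ofReal_pos.2 ?_).ne'
      exact Finset.prod_pos fun l _ => (hq (l + 1) (by omega)).1
    have hcfin : c ≠ ⊤ := ENNReal.ofReal_ne_top
    have hDle : ∀ n, c * (∑ j ∈ Finset.Icc 1 K0, Stmt5Aux.G μ i n j)
        ≤ μ i (Stmt5Aux.A n) - μ i (Stmt5Aux.A (n + K0)) := by
      intro n
      rw [mul_comm]
      exact ENNReal.le_sub_of_add_le_left (MeasureTheory.measure_ne_top _ _)
        (Stmt5Aux.descent_ineq hp hq hlaw i n K0)
    have h2 : Tendsto (fun n => μ i (Stmt5Aux.A (n + K0))) atTop (nhds L) := by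
      have := hlim.comp (tendsto_add_atTop_nat K0)
      exact this
    have hsub0 : Tendsto (fun n => μ i (Stmt5Aux.A n) - μ i (Stmt5Aux.A (n + K0))) atTop
        (nhds 0) := by
      have h3 := ENNReal.Tendsto.sub hlim h2 (Or.inl (MeasureTheory.measure_ne_top _ _))
      simpa [tsub_self] using h3
    have hcD : Tendsto (fun n => c * (∑ j ∈ Finset.Icc 1 K0, Stmt5Aux.G μ i n j)) atTop
        (nhds 0) :=
      tendsto_of_tendsto_of_tendsto_of_le_of_le tendsto_const_nhds hsub0
        (fun n => zero_le) hDle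
    have hD0 : Tendsto (fun n => ∑ j ∈ Finset.Icc 1 K0, Stmt5Aux.G μ i n j) atTop (nhds 0) := by
      have h3 := ENNReal.Tendsto.const_mul (a := c⁻¹) hcD
        (Or.inr (ENNReal.inv_ne_top.2 hcpos))
      simp only [← mul_assoc, ENNReal.inv_mul_cancel hcpos hcfin, one_mul, mul_zero] at h3
      exact h3
    have hLle : L ≤ 0 + Stmt5Aux.hfun p q i / ENNReal.ofReal (1 - ε) :=
      le_of_tendsto_of_tendsto' hlim (hD0.add tendsto_const_nhds) hsplit
    rw [zero_add] at hLle
    calc L * ENNReal.ofReal (1 - ε)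
        ≤ (Stmt5Aux.hfun p q i / ENNReal.ofReal (1 - ε)) * ENNReal.ofReal (1 - ε) :=
          mul_le_mul_left hLle _
      _ = Stmt5Aux.hfun p q i := ENNReal.div_mul_cancel hne0 hnetop
  -- let ε → 0
  have hupper' : L ≤ Stmt5Aux.hfun p q i := by
    have hterm : ∀ k : ℕ, L * ENNReal.ofReal (1 - 1 / ((k : ℝ) + 2)) ≤ Stmt5Aux.hfun p q i := by
      intro k
      apply hupper
      · positivity
      · rw [div_lt_one (by positivity)]
        have hk : (0:ℝ) ≤ (k : ℝ) := Nat.cast_nonneg k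
        linarith
    have ht0 : Tendsto (fun k : ℕ => 1 / ((k : ℝ) + 2)) atTop (nhds 0) := by
      simp only [one_div]
      exact Tendsto.inv_tendsto_atTop
        (tendsto_atTop_add_const_right _ 2 tendsto_natCast_atTop_atTop)
    have ht1 : Tendsto (fun k : ℕ => (1 : ℝ) - 1 / ((k : ℝ) + 2)) atTop (nhds 1) := by
      have := (tendsto_const_nhds : Tendsto (fun _ : ℕ => (1:ℝ)) atTop (nhds 1)).sub ht0
      simpa using this
    have ht2 : Tendsto (fun k : ℕ => ENNReal.ofReal (1 - 1 / ((k : ℝ) + 2))) atTop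
        (nhds 1) := by
      have := (ENNReal.continuous_ofReal.tendsto 1).comp ht1
      simpa [Function.comp_def] using this
    have ht3 : Tendsto (fun k : ℕ => L * ENNReal.ofReal (1 - 1 / ((k : ℝ) + 2))) atTop
        (nhds L) := by
      have := ENNReal.Tendsto.const_mul (a := L) ht2 (Or.inl one_ne_zero)
      simpa using this
    exact le_of_tendsto ht3 (Eventually.of_forall hterm)
  exact le_antisymm hupper' hlower
end

section
/- If ∑_{n=1}^{∞} b_n = ∞ (i.e. the series diverges), then the reflecting birth–death chain is recurrent: for every starting state i ∈ ℕ and every state j ∈ ℕ, μ_i-almost surely the set {n ∈ ℕ : ω_n = j} is infinite. -/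
open MeasureTheory Filter
open scoped ENNReal

noncomputable def uu (p q : ℕ → ℝ) (j : ℕ) : ℕ → ℕ → ℝ
  | 0 => fun _ => 1
  | (M+1) => fun x =>
      rfKernel p q x (x+1) * (if x+1 = j then 0 else uu p q j M (x+1)) +
      rfKernel p q x (x-1) * (if x-1 = j then 0 else uu p q j M (x-1))

section
variable (p q : ℕ → ℝ)
variable (hp : ∀ i, 1 ≤ i → p i ∈ Set.Ioo (0 : ℝ) 1) (hq : ∀ i, 1 ≤ i → q i ∈ Set.Ioo (0 : ℝ) 1)
variable (hpq : ∀ i, 1 ≤ i → p i + q i = 1) (hp0 : p 0 = 1)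

include hp hq in
lemma K_nonneg (x y : ℕ) : 0 ≤ rfKernel p q x y := by
  unfold rfKernel
  rcases Nat.eq_zero_or_pos x with h | h
  · simp only [h, if_true]; split <;> norm_num
  · have hx : x ≠ 0 := h.ne'
    simp only [hx, if_false]
    split
    · exact (hp x h).1.le
    · split
      · exact (hq x h).1.le
      · exact le_refl 0

lemma K_up (x : ℕ) : rfKernel p q x (x+1) = if x = 0 then 1 else p x := by
  unfold rfKernel
  rcases eq_or_ne x 0 with h | h <;> simp [h]

lemma K_down (x : ℕ) : rfKernel p q x (x-1) = if x = 0 then 0 else q x := by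
  unfold rfKernel
  rcases eq_or_ne x 0 with h | h
  · simp [h]
  · have : x - 1 ≠ x + 1 := by omega
    simp [h, this]

lemma K_other (x y : ℕ) (h1 : y ≠ x+1) (h2 : y ≠ x-1) : rfKernel p q x y = 0 := by
  unfold rfKernel
  rcases eq_or_ne x 0 with h | h
  · subst h; simp at h1; simp [h1]
  · simp [h, h1, h2]

include hpq in
lemma K_sum (x : ℕ) : rfKernel p q x (x+1) + rfKernel p q x (x-1) = 1 := by
  rw [K_up, K_down]
  rcases eq_or_ne x 0 with h | h
  · simp [h]
  · simp only [h, if_false]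
    exact hpq x (by omega)

include hp in
lemma K_up_pos (x : ℕ) : 0 < rfKernel p q x (x+1) := by
  rw [K_up]
  split
  · norm_num
  · exact (hp x (by omega)).1
end

section
variable (p q : ℕ → ℝ)
variable (hp : ∀ i, 1 ≤ i → p i ∈ Set.Ioo (0 : ℝ) 1) (hq : ∀ i, 1 ≤ i → q i ∈ Set.Ioo (0 : ℝ) 1)
variable (hpq : ∀ i, 1 ≤ i → p i + q i = 1) (hp0 : p 0 = 1)
variable (j : ℕ)

include hp hq in
lemma uu_nonneg : ∀ (M x : ℕ), 0 ≤ uu p q j M x := by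
  intro M
  induction M with
  | zero => intro x; simp [uu]
  | succ M ih =>
    intro x
    simp only [uu]
    have h1 : 0 ≤ (if x+1 = j then 0 else uu p q j M (x+1)) := by
      split; exact le_refl 0; exact ih _
    have h2 : 0 ≤ (if x-1 = j then 0 else uu p q j M (x-1)) := by
      split; exact le_refl 0; exact ih _
    have := K_nonneg p q hp hq x (x+1)
    have := K_nonneg p q hp hq x (x-1)
    positivity

include hp hq hpq in
lemma uu_le_one : ∀ (M x : ℕ), uu p q j M x ≤ 1 := by
  intro M
  induction M with
  | zero => intro x; simp [uu]
  | succ M ih =>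
    intro x
    simp only [uu]
    have h1 : (if x+1 = j then 0 else uu p q j M (x+1)) ≤ 1 := by
      split; norm_num; exact ih _
    have h2 : (if x-1 = j then 0 else uu p q j M (x-1)) ≤ 1 := by
      split; norm_num; exact ih _
    calc rfKernel p q x (x+1) * (if x+1 = j then 0 else uu p q j M (x+1)) +
        rfKernel p q x (x-1) * (if x-1 = j then 0 else uu p q j M (x-1))
        ≤ rfKernel p q x (x+1) * 1 + rfKernel p q x (x-1) * 1 := by
          gcongr
          · exact K_nonneg p q hp hq x _
          · exact K_nonneg p q hp hq x _
      _ = 1 := by rw [mul_one, mul_one]; exact K_sum p q hpq x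

include hp hq hpq in
lemma uu_succ_le : ∀ (M x : ℕ), uu p q j (M+1) x ≤ uu p q j M x := by
  intro M
  induction M with
  | zero => intro x; simpa [uu] using uu_le_one p q hp hq hpq j 1 x
  | succ M ih =>
    intro x
    simp only [uu]
    gcongr
    · exact K_nonneg p q hp hq x _
    · split; exact le_refl 0; exact ih _
    · exact K_nonneg p q hp hq x _
    · split; exact le_refl 0; exact ih _

include hp hq hpq in
lemma uu_anti (x : ℕ) : Antitone (fun M => uu p q j M x) :=
  antitone_nat_of_succ_le (fun M => uu_succ_le p q hp hq hpq j M x)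

noncomputable def LL (p q : ℕ → ℝ) (j x : ℕ) : ℝ := ⨅ M, uu p q j M x

include hp hq hpq in
lemma tendsto_uu (x : ℕ) :
    Tendsto (fun M => uu p q j M x) atTop (nhds (LL p q j x)) :=
  tendsto_atTop_ciInf (uu_anti p q hp hq hpq j x)
    ⟨0, fun _ ⟨M, hM⟩ => hM ▸ uu_nonneg p q hp hq j M x⟩

include hp hq hpq in
lemma LL_nonneg (x : ℕ) : 0 ≤ LL p q j x :=
  le_ciInf (fun M => uu_nonneg p q hp hq j M x)

include hp hq hpq in
lemma LL_le_one (x : ℕ) : LL p q j x ≤ 1 :=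
  le_trans (ciInf_le ⟨0, fun _ ⟨M, hM⟩ => hM ▸ uu_nonneg p q hp hq j M x⟩ 0)
    (uu_le_one p q hp hq hpq j 0 x)

include hp hq hpq in
lemma LL_harmonic (x : ℕ) :
    LL p q j x = rfKernel p q x (x+1) * (if x+1 = j then 0 else LL p q j (x+1)) +
      rfKernel p q x (x-1) * (if x-1 = j then 0 else LL p q j (x-1)) := by
  have h1 : Tendsto (fun M => uu p q j (M+1) x) atTop (nhds (LL p q j x)) :=
    (tendsto_uu p q hp hq hpq j x).comp (tendsto_add_atTop_nat 1)
  have h2 : Tendsto (fun M => uu p q j (M+1) x) atTop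
      (nhds (rfKernel p q x (x+1) * (if x+1 = j then 0 else LL p q j (x+1)) +
        rfKernel p q x (x-1) * (if x-1 = j then 0 else LL p q j (x-1)))) := by
    simp only [uu]
    apply Tendsto.add
    · apply Tendsto.const_mul
      split
      · exact tendsto_const_nhds
      · exact tendsto_uu p q hp hq hpq j _
    · apply Tendsto.const_mul
      split
      · exact tendsto_const_nhds
      · exact tendsto_uu p q hp hq hpq j _
  exact tendsto_nhds_unique h1 h2
end

noncomputable def AA (p q : ℕ → ℝ) (j x : ℕ) : ℝ :=
  if x = j then 0 else LL p q j x

section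
variable (p q : ℕ → ℝ)
variable (hp : ∀ i, 1 ≤ i → p i ∈ Set.Ioo (0 : ℝ) 1) (hq : ∀ i, 1 ≤ i → q i ∈ Set.Ioo (0 : ℝ) 1)
variable (hpq : ∀ i, 1 ≤ i → p i + q i = 1) (hp0 : p 0 = 1)
variable (j : ℕ)

include hp hq hpq in
lemma AA_harmonic (x : ℕ) (hx : j + 1 ≤ x) :
    AA p q j x = p x * AA p q j (x+1) + q x * AA p q j (x-1) := by
  have hx0 : x ≠ 0 := by omega
  have hxj : x ≠ j := by omega
  have h := LL_harmonic p q hp hq hpq j x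
  rw [K_up, K_down] at h
  simp only [hx0, if_false] at h
  rw [AA, if_neg hxj, h, AA, AA]

include hp hq hpq in
lemma AA_diff (d : ℕ) :
    AA p q j (j+d+1) - AA p q j (j+d) =
      LL p q j (j+1) * ∏ i ∈ Finset.Icc (j+1) (j+d), (q i / p i) := by
  induction d with
  | zero =>
    rw [Finset.Icc_eq_empty (by omega), Finset.prod_empty, mul_one]
    simp [AA, (show j + 1 ≠ j by omega)]
  | succ d ih =>
    have hx : j + 1 ≤ j + d + 1 := by omega
    have hp' : p (j+d+1) ≠ 0 := ne_of_gt (hp _ (by omega)).1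
    have harm := AA_harmonic p q hp hq hpq j (j+d+1) hx
    rw [(show j + d + 1 - 1 = j + d by omega)] at harm
    have hpqx := hpq (j+d+1) (by omega)
    have key : AA p q j (j+d+1+1) - AA p q j (j+d+1)
        = (q (j+d+1) / p (j+d+1)) * (AA p q j (j+d+1) - AA p q j (j+d)) := by
      field_simp
      linear_combination (-1 : ℝ) * harm - AA p q j (j+d+1) * hpqx
    rw [(show j + (d+1) + 1 = j + d + 1 + 1 by omega), (show j + (d+1) = j + d + 1 by omega),
      key, ih, Finset.prod_Icc_succ_top (show j + 1 ≤ j + d + 1 by omega)]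
    ring

include hp hq hpq in
lemma AA_sum (n : ℕ) :
    AA p q j (j+n) =
      LL p q j (j+1) * ∑ d ∈ Finset.range n, ∏ i ∈ Finset.Icc (j+1) (j+d), (q i / p i) := by
  have := Finset.sum_range_sub (fun d => AA p q j (j+d)) n
  rw [Finset.mul_sum]
  calc AA p q j (j+n) = AA p q j (j+n) - AA p q j (j+0) := by
        simp [AA]
    _ = ∑ d ∈ Finset.range n, (AA p q j (j+(d+1)) - AA p q j (j+d)) := by
        rw [this]
    _ = ∑ d ∈ Finset.range n, LL p q j (j+1) * ∏ i ∈ Finset.Icc (j+1) (j+d), (q i / p i) := by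
        apply Finset.sum_congr rfl
        intro d _
        have : j + (d+1) = j + d + 1 := by omega
        rw [this, AA_diff p q hp hq hpq j d]

include hp hq in
lemma bseq_pos (n : ℕ) : 0 < bseq p q n := by
  apply Finset.prod_pos
  intro i hi
  rw [Finset.mem_Icc] at hi
  exact div_pos (hq i hi.1).1 (hp i hi.1).1

lemma bseq_split (d : ℕ) :
    bseq p q (j+d) = bseq p q j * ∏ i ∈ Finset.Icc (j+1) (j+d), (q i / p i) := by
  unfold bseq
  have h1 : Finset.Icc 1 (j+d) = Finset.Ioc 0 (j+d) := by
    ext x; simp [Nat.lt_iff_add_one_le]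
  have h2 : Finset.Icc 1 j = Finset.Ioc 0 j := by
    ext x; simp [Nat.lt_iff_add_one_le]
  have h3 : Finset.Icc (j+1) (j+d) = Finset.Ioc j (j+d) := by
    ext x; simp only [Finset.mem_Icc, Finset.mem_Ioc]; omega
  rw [h1, h2, h3, ← Finset.prod_Ioc_consecutive _ (Nat.zero_le j) (Nat.le_add_right j d)]

include hp hq hpq hp0 in
lemma LL_j1_zero (hb : ¬ Summable (fun n : ℕ => bseq p q (n + 1))) :
    LL p q j (j+1) = 0 := by
  -- partial sums of bseq (j+d) tend to ∞
  have hnotsum : ¬ Summable (fun d : ℕ => bseq p q (j + d)) := by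
    intro hs
    have hs' : Summable (fun d : ℕ => bseq p q (d + j)) := by
      apply hs.congr; intro d; rw [Nat.add_comm]
    have : Summable (bseq p q) := (summable_nat_add_iff j).mp hs'
    exact hb ((summable_nat_add_iff 1).mpr this)
  have hpos : ∀ d : ℕ, 0 ≤ bseq p q (j + d) := fun d => (bseq_pos p q hp hq _).le
  have htend : Tendsto (fun n => ∑ d ∈ Finset.range n, bseq p q (j + d)) atTop atTop :=
    (not_summable_iff_tendsto_nat_atTop_of_nonneg hpos).mp hnotsum
  set c := LL p q j (j+1) with hc
  have hc0 : 0 ≤ c := LL_nonneg p q hp hq hpq j (j+1)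
  by_contra hne
  have hcpos : 0 < c := lt_of_le_of_ne hc0 (Ne.symm hne)
  have hbj : 0 < bseq p q j := bseq_pos p q hp hq j
  -- AA (j+n) = c * sum, and AA ≤ 1
  have hAA_le : ∀ n, AA p q j (j+n) ≤ 1 := by
    intro n
    unfold AA
    split
    · norm_num
    · exact LL_le_one p q hp hq hpq j _
  have hsum_eq : ∀ n, ∑ d ∈ Finset.range n, bseq p q (j + d)
      = bseq p q j * ∑ d ∈ Finset.range n, ∏ i ∈ Finset.Icc (j+1) (j+d), (q i / p i) := by
    intro n
    rw [Finset.mul_sum]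
    exact Finset.sum_congr rfl (fun d _ => bseq_split p q j d)
  have htend2 : Tendsto (fun n => (c / bseq p q j) * ∑ d ∈ Finset.range n, bseq p q (j + d))
      atTop atTop := Tendsto.const_mul_atTop (div_pos hcpos hbj) htend
  have hbdd : ∀ n, (c / bseq p q j) * ∑ d ∈ Finset.range n, bseq p q (j + d) ≤ 1 := by
    intro n
    rw [hsum_eq n]
    have : c / bseq p q j * (bseq p q j * ∑ d ∈ Finset.range n, ∏ i ∈ Finset.Icc (j+1) (j+d), (q i / p i))
        = c * ∑ d ∈ Finset.range n, ∏ i ∈ Finset.Icc (j+1) (j+d), (q i / p i) := by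
      field_simp
    rw [this, ← AA_sum p q hp hq hpq j n]
    exact hAA_le n
  obtain ⟨n, hn⟩ := (htend2.eventually_gt_atTop 1).exists
  exact absurd (hbdd n) (not_le.mpr hn)

include hp hq hpq hp0 in
lemma LL_above (hb : ¬ Summable (fun n : ℕ => bseq p q (n + 1))) :
    ∀ x, j < x → LL p q j x = 0 := by
  have hc : LL p q j (j+1) = 0 := LL_j1_zero p q hp hq hpq hp0 j hb
  have hAA : ∀ d, AA p q j (j + d) = 0 := by
    intro d
    induction d with
    | zero => simp [AA]
    | succ d ih =>
      have := AA_diff p q hp hq hpq j d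
      rw [hc, zero_mul] at this
      have h2 : AA p q j (j + d + 1) = AA p q j (j + d) := by linarith
      rw [(show j + (d+1) = j + d + 1 by omega), h2, ih]
  intro x hx
  have := hAA (x - j)
  rw [(show j + (x - j) = x by omega)] at this
  unfold AA at this
  rw [if_neg (by omega)] at this
  exact this

include hp hq hpq in
lemma LL_below : ∀ x, x < j → LL p q j x = 0 := by
  intro x hxj
  have hj : 1 ≤ j := by omega
  have hne : (Finset.range j).Nonempty := ⟨0, Finset.mem_range.mpr hj⟩
  set m := (Finset.range j).sup' hne (LL p q j) with hm
  have hle : ∀ y, y < j → LL p q j y ≤ m :=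
    fun y hy => Finset.le_sup' _ (Finset.mem_range.mpr hy)
  -- claim : by induction on d
  have claim : ∀ d x', x' + (d+1) = j → LL p q j x' = m → m = 0 := by
    intro d
    induction d with
    | zero =>
      intro x' hx' hLx'
      have harm := LL_harmonic p q hp hq hpq j x'
      rw [if_pos (by omega : x' + 1 = j), mul_zero, zero_add,
        if_neg (by omega : ¬ x' - 1 = j)] at harm
      have h1 : LL p q j (x' - 1) ≤ m := hle _ (by omega)
      have hKd : 0 ≤ rfKernel p q x' (x' - 1) := K_nonneg p q hp hq _ _
      have hKu : 0 < rfKernel p q x' (x' + 1) := K_up_pos p q hp x'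
      have hKs : rfKernel p q x' (x'+1) + rfKernel p q x' (x'-1) = 1 := K_sum p q hpq x'
      have hm0 : 0 ≤ m := hLx' ▸ LL_nonneg p q hp hq hpq j x'
      have e' : rfKernel p q x' (x'+1) * m + rfKernel p q x' (x'-1) * m = m := by
        rw [← add_mul, hKs, one_mul]
      have hmul : rfKernel p q x' (x'-1) * LL p q j (x'-1) ≤ rfKernel p q x' (x'-1) * m :=
        mul_le_mul_of_nonneg_left h1 hKd
      rw [hLx'] at harm
      have hKum : rfKernel p q x' (x'+1) * m ≤ rfKernel p q x' (x'+1) * 0 := by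
        rw [mul_zero]; linarith
      have := le_of_mul_le_mul_left hKum hKu
      linarith
    | succ d ih =>
      intro x' hx' hLx'
      have harm := LL_harmonic p q hp hq hpq j x'
      rw [if_neg (by omega : ¬ x' + 1 = j), if_neg (by omega : ¬ x' - 1 = j)] at harm
      have h1 : LL p q j (x' - 1) ≤ m := hle _ (by omega)
      have h2 : LL p q j (x' + 1) ≤ m := hle _ (by omega)
      have hKd : 0 ≤ rfKernel p q x' (x' - 1) := K_nonneg p q hp hq _ _
      have hKu : 0 < rfKernel p q x' (x' + 1) := K_up_pos p q hp x'
      have hKs : rfKernel p q x' (x'+1) + rfKernel p q x' (x'-1) = 1 := K_sum p q hpq x'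
      have e' : rfKernel p q x' (x'+1) * m + rfKernel p q x' (x'-1) * m = m := by
        rw [← add_mul, hKs, one_mul]
      have hmul : rfKernel p q x' (x'-1) * LL p q j (x'-1) ≤ rfKernel p q x' (x'-1) * m :=
        mul_le_mul_of_nonneg_left h1 hKd
      rw [hLx'] at harm
      have hKum : rfKernel p q x' (x'+1) * m ≤ rfKernel p q x' (x'+1) * LL p q j (x'+1) := by
        linarith
      have heq : LL p q j (x' + 1) = m := le_antisymm h2 (le_of_mul_le_mul_left hKum hKu)
      exact ih (x' + 1) (by omega) heq
  -- the max is attained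
  obtain ⟨x0, hx0mem, hx0⟩ := Finset.exists_mem_eq_sup' hne (LL p q j)
  rw [Finset.mem_range] at hx0mem
  have harg : x0 + (j - x0 - 1 + 1) = j := by omega
  have hm0 : m = 0 := claim (j - x0 - 1) x0 harg hx0.symm
  have := LL_nonneg p q hp hq hpq j x
  have := hle x hxj
  linarith

include hp hq hpq hp0 in
lemma LL_zero (hb : ¬ Summable (fun n : ℕ => bseq p q (n + 1))) :
    ∀ x, LL p q j x = 0 := by
  intro x
  rcases lt_trichotomy x j with h | h | h
  · exact LL_below p q hp hq hpq j x h
  · subst h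
    have harm := LL_harmonic p q hp hq hpq x x
    have h1 : (if x + 1 = x then (0:ℝ) else LL p q x (x+1)) = 0 := by
      rw [if_neg (by omega)]
      exact LL_above p q hp hq hpq hp0 x hb (x+1) (by omega)
    rcases Nat.eq_zero_or_pos x with h0 | h0
    · subst h0
      rw [h1, mul_zero, zero_add, if_pos rfl, mul_zero] at harm
      exact harm
    · have h2 : (if x - 1 = x then (0:ℝ) else LL p q x (x-1)) = 0 := by
        rw [if_neg (by omega)]
        exact LL_below p q hp hq hpq x (x-1) (by omega)
      rw [h1, h2, mul_zero, mul_zero, add_zero] at harm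
      exact harm
  · exact LL_above p q hp hq hpq hp0 j hb x h

include hp hq hpq hp0 in
lemma tendsto_uu_zero (hb : ¬ Summable (fun n : ℕ => bseq p q (n + 1))) (x : ℕ) :
    Tendsto (fun M => uu p q j M x) atTop (nhds 0) := by
  have := tendsto_uu p q hp hq hpq j x
  rwa [LL_zero p q hp hq hpq hp0 j hb x] at this
end

def cylSet (g : ℕ → ℕ) (N : ℕ) : Set (ℕ → ℕ) := {ω | ∀ m ≤ N, ω m = g m}

def ESet (j : ℕ) (g : ℕ → ℕ) (N M : ℕ) : Set (ℕ → ℕ) :=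
  {ω | (∀ m ≤ N, ω m = g m) ∧ ∀ n, N+1 ≤ n → n ≤ N+M → ω n ≠ j}

lemma meas_eval_eq (m c : ℕ) : MeasurableSet {ω : ℕ → ℕ | ω m = c} := by
  have h : {ω : ℕ → ℕ | ω m = c} = (fun ω : ℕ → ℕ => ω m) ⁻¹' {c} := rfl
  rw [h]
  exact measurable_pi_apply m (measurableSet_singleton c)

lemma meas_cyl (g : ℕ → ℕ) (N : ℕ) : MeasurableSet (cylSet g N) := by
  have h : cylSet g N = ⋂ (m : ℕ) (_ : m ≤ N), {ω : ℕ → ℕ | ω m = g m} := by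
    ext ω; simp [cylSet]
  rw [h]
  exact MeasurableSet.iInter fun m => MeasurableSet.iInter fun _ => meas_eval_eq m (g m)

lemma meas_E (j : ℕ) (g : ℕ → ℕ) (N M : ℕ) : MeasurableSet (ESet j g N M) := by
  have h : ESet j g N M = cylSet g N ∩
      ⋂ (n : ℕ) (_ : N+1 ≤ n) (_ : n ≤ N+M), {ω : ℕ → ℕ | ω n = j}ᶜ := by
    ext ω; simp [ESet, cylSet]
  rw [h]
  exact (meas_cyl g N).inter (MeasurableSet.iInter fun n => MeasurableSet.iInter fun _ =>
    MeasurableSet.iInter fun _ => (meas_eval_eq n j).compl)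

section
variable (p q : ℕ → ℝ)
variable (hp : ∀ i, 1 ≤ i → p i ∈ Set.Ioo (0 : ℝ) 1) (hq : ∀ i, 1 ≤ i → q i ∈ Set.Ioo (0 : ℝ) 1)
variable (hpq : ∀ i, 1 ≤ i → p i + q i = 1) (hp0 : p 0 = 1)
variable (μ : ℕ → Measure (ℕ → ℕ)) (hlaw : IsRFLaw p q μ)

include hp hq hlaw in
lemma cyl_update (i N y : ℕ) (g : ℕ → ℕ) :
    μ i (cylSet (Function.update g (N+1) y) (N+1)) =
      μ i (cylSet g N) * ENNReal.ofReal (rfKernel p q (g N) y) := by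
  set g' := Function.update g (N+1) y with hg'
  have h0 : g' 0 = g 0 := Function.update_of_ne (by omega) _ _
  have hN : g' N = g N := Function.update_of_ne (by omega) _ _
  have hN1 : g' (N+1) = y := Function.update_self _ _ _
  have hprod : ∏ m ∈ Finset.range (N+1), rfKernel p q (g' m) (g' (m+1)) =
      (∏ m ∈ Finset.range N, rfKernel p q (g m) (g (m+1))) * rfKernel p q (g N) y := by
    rw [Finset.prod_range_succ, hN, hN1]
    congr 1
    apply Finset.prod_congr rfl
    intro m hm
    rw [Finset.mem_range] at hm
    simp only [hg']
    rw [Function.update_of_ne (by omega : m ≠ N+1), Function.update_of_ne (by omega : m+1 ≠ N+1)]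
  have hr : 0 ≤ (if g 0 = i then (1:ℝ) else 0) * ∏ m ∈ Finset.range N, rfKernel p q (g m) (g (m+1)) := by
    apply mul_nonneg
    · split <;> norm_num
    · exact Finset.prod_nonneg fun m _ => K_nonneg p q hp hq _ _
  have l1 := hlaw i (N+1) g'
  have l2 := hlaw i N g
  rw [show {ω : ℕ → ℕ | ∀ m ≤ N+1, ω m = g' m} = cylSet g' (N+1) from rfl] at l1
  rw [show {ω : ℕ → ℕ | ∀ m ≤ N, ω m = g m} = cylSet g N from rfl] at l2
  rw [l1, l2, hprod, h0, ← mul_assoc, ENNReal.ofReal_mul hr]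

include hp hq hlaw in
lemma measE (j i : ℕ) : ∀ (M N : ℕ) (g : ℕ → ℕ),
    μ i (ESet j g N M) = μ i (cylSet g N) * ENNReal.ofReal (uu p q j M (g N)) := by
  intro M
  induction M with
  | zero =>
    intro N g
    have h : ESet j g N 0 = cylSet g N := by
      ext ω
      simp only [ESet, cylSet, Set.mem_setOf_eq]
      constructor
      · exact fun h => h.1
      · exact fun h => ⟨h, fun n h1 h2 => absurd (le_trans h1 h2) (by omega)⟩
    rw [h]
    simp [uu]
  | succ M ih =>
    intro N g
    set x := g N with hx
    set S : ℕ → Set (ℕ → ℕ) := fun y => ESet j g N (M+1) ∩ (fun ω => ω (N+1)) ⁻¹' {y}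
      with hS
    have hcover : ESet j g N (M+1) = ⋃ y, S y := by
      ext ω
      simp only [hS, Set.mem_iUnion, Set.mem_inter_iff, Set.mem_preimage, Set.mem_singleton_iff]
      constructor
      · exact fun h => ⟨ω (N+1), h, rfl⟩
      · rintro ⟨y, h, -⟩; exact h
    have hdisj : Pairwise (Function.onFun Disjoint S) := by
      intro y z hyz
      apply Set.disjoint_left.mpr
      rintro ω ⟨-, hy⟩ ⟨-, hz⟩
      rw [Set.mem_preimage, Set.mem_singleton_iff] at hy hz
      exact hyz (hy ▸ hz ▸ rfl)
    have hSm : ∀ y, MeasurableSet (S y) := by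
      intro y
      apply (meas_E j g N (M+1)).inter
      exact measurable_pi_apply (N+1) (measurableSet_singleton y)
    have hSval : ∀ y : ℕ, S y =
        if y = j then (∅ : Set (ℕ → ℕ)) else ESet j (Function.update g (N+1) y) (N+1) M := by
      intro y
      ext ω
      simp only [hS, Set.mem_inter_iff, Set.mem_preimage, Set.mem_singleton_iff, ESet,
        Set.mem_setOf_eq]
      split
      · -- y = j
        subst ‹y = j›
        simp only [Set.mem_empty_iff_false, iff_false, not_and]
        rintro ⟨-, havoid⟩ hval
        exact havoid (N+1) (le_refl _) (by omega) hval
      · rename_i hyj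
        constructor
        · rintro ⟨⟨hcy, havoid⟩, hval⟩
          refine ⟨fun m hm => ?_, fun n h1 h2 => ?_⟩
          · rcases Nat.lt_or_ge m (N+1) with h | h
            · rw [Function.update_of_ne (by omega : m ≠ N+1)]
              exact hcy m (by omega)
            · have : m = N+1 := by omega
              subst this
              rw [Function.update_self]
              exact hval
          · exact havoid n (by omega) (by omega)
        · rintro ⟨hcy, havoid⟩
          have hval : ω (N+1) = y := by
            have := hcy (N+1) (le_refl _)
            rwa [Function.update_self] at this
          refine ⟨⟨fun m hm => ?_, fun n h1 h2 => ?_⟩, hval⟩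
          · have := hcy m (by omega)
            rwa [Function.update_of_ne (by omega : m ≠ N+1)] at this
          · rcases Nat.lt_or_ge n (N+2) with h | h
            · have : n = N+1 := by omega
              subst this
              rw [hval]
              exact hyj
            · exact havoid n (by omega) (by omega)
    have hsum : μ i (ESet j g N (M+1)) = ∑' y, μ i (S y) := by
      rw [hcover, measure_iUnion hdisj hSm]
    -- value of each term
    have hterm : ∀ y : ℕ, μ i (S y) =
        if y = j then 0 else
          μ i (cylSet g N) * ENNReal.ofReal (rfKernel p q x y) * ENNReal.ofReal (uu p q j M y) := by
      intro y
      rw [hSval y]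
      split
      · exact measure_empty
      · rw [ih (N+1) (Function.update g (N+1) y), Function.update_self,
          cyl_update p q hp hq μ hlaw i N y g]
    have hzero : ∀ y : ℕ, y ∉ ({x+1, x-1} : Finset ℕ) → μ i (S y) = 0 := by
      intro y hy
      simp only [Finset.mem_insert, Finset.mem_singleton] at hy
      push_neg at hy
      rw [hterm y]
      split
      · rfl
      · rw [K_other p q x y hy.1 hy.2]
        simp
    have htsum : ∑' y, μ i (S y) = ∑ y ∈ ({x+1, x-1} : Finset ℕ), μ i (S y) :=
      tsum_eq_sum hzero
    have hxne : x + 1 ≠ x - 1 := by omega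
    rw [hsum, htsum, Finset.sum_pair hxne, hterm (x+1), hterm (x-1)]
    -- now pure algebra in ℝ≥0∞
    have huu : uu p q j (M+1) x =
        rfKernel p q x (x+1) * (if x+1 = j then 0 else uu p q j M (x+1)) +
        rfKernel p q x (x-1) * (if x-1 = j then 0 else uu p q j M (x-1)) := rfl
    have hnn1 : 0 ≤ rfKernel p q x (x+1) * (if x+1 = j then 0 else uu p q j M (x+1)) := by
      apply mul_nonneg (K_nonneg p q hp hq _ _)
      split
      · exact le_refl 0
      · exact uu_nonneg p q hp hq j M _
    have hnn2 : 0 ≤ rfKernel p q x (x-1) * (if x-1 = j then 0 else uu p q j M (x-1)) := by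
      apply mul_nonneg (K_nonneg p q hp hq _ _)
      split
      · exact le_refl 0
      · exact uu_nonneg p q hp hq j M _
    rw [huu, ENNReal.ofReal_add hnn1 hnn2, mul_add]
    congr 1
    · split
      · simp
      · rw [ENNReal.ofReal_mul (K_nonneg p q hp hq _ _), mul_assoc]
    · split
      · simp
      · rw [ENNReal.ofReal_mul (K_nonneg p q hp hq _ _), mul_assoc]
end

section
variable (p q : ℕ → ℝ)
variable (hp : ∀ i, 1 ≤ i → p i ∈ Set.Ioo (0 : ℝ) 1) (hq : ∀ i, 1 ≤ i → q i ∈ Set.Ioo (0 : ℝ) 1)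
variable (hpq : ∀ i, 1 ≤ i → p i + q i = 1) (hp0 : p 0 = 1)
variable (μ : ℕ → Measure (ℕ → ℕ)) (hlaw : IsRFLaw p q μ)

include hp hq hpq hp0 hlaw in
lemma E_inf_null (hμ : ∀ i, IsProbabilityMeasure (μ i))
    (hb : ¬ Summable (fun n : ℕ => bseq p q (n + 1))) (j i N : ℕ) (g : ℕ → ℕ) :
    μ i {ω : ℕ → ℕ | (∀ m ≤ N, ω m = g m) ∧ ∀ n, N+1 ≤ n → ω n ≠ j} = 0 := by
  haveI := hμ i
  set F := {ω : ℕ → ℕ | (∀ m ≤ N, ω m = g m) ∧ ∀ n, N+1 ≤ n → ω n ≠ j} with hF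
  have hsub : ∀ M, F ⊆ ESet j g N M := fun M ω hω =>
    ⟨hω.1, fun n h1 _ => hω.2 n h1⟩
  have hbound : ∀ M, μ i F ≤ ENNReal.ofReal (uu p q j M (g N)) := by
    intro M
    calc μ i F ≤ μ i (ESet j g N M) := measure_mono (hsub M)
      _ = μ i (cylSet g N) * ENNReal.ofReal (uu p q j M (g N)) :=
          measE p q hp hq μ hlaw j i M N g
      _ ≤ 1 * ENNReal.ofReal (uu p q j M (g N)) := by
          gcongr
          exact prob_le_one
      _ = _ := one_mul _
  have htend : Tendsto (fun M => ENNReal.ofReal (uu p q j M (g N))) atTop (nhds 0) := by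
    have := ENNReal.tendsto_ofReal (tendsto_uu_zero p q hp hq hpq hp0 j hb (g N))
    rwa [ENNReal.ofReal_zero] at this
  exact le_antisymm (ge_of_tendsto' htend hbound) (by positivity)

include hp hq hpq hp0 hlaw in
lemma avoid_null (hμ : ∀ i, IsProbabilityMeasure (μ i))
    (hb : ¬ Summable (fun n : ℕ => bseq p q (n + 1))) (j i N : ℕ) :
    μ i {ω : ℕ → ℕ | ∀ n, N+1 ≤ n → ω n ≠ j} = 0 := by
  set gv : (Fin (N+1) → ℕ) → ℕ → ℕ := fun v m => if h : m < N+1 then v ⟨m, h⟩ else 0 with hgv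
  have hsub : {ω : ℕ → ℕ | ∀ n, N+1 ≤ n → ω n ≠ j} ⊆
      ⋃ (v : Fin (N+1) → ℕ),
        {ω : ℕ → ℕ | (∀ m ≤ N, ω m = gv v m) ∧ ∀ n, N+1 ≤ n → ω n ≠ j} := by
    intro ω hω
    refine Set.mem_iUnion.mpr ⟨fun k => ω k, fun m hm => ?_, hω⟩
    simp only [hgv]
    rw [dif_pos (by omega : m < N+1)]
  exact measure_mono_null hsub (measure_iUnion_null fun v =>
    E_inf_null p q hp hq hpq hp0 μ hlaw hμ hb j i N (gv v))
end

theorem stmt6 (p q : ℕ → ℝ)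
    (hp : ∀ i, 1 ≤ i → p i ∈ Set.Ioo (0 : ℝ) 1) (hq : ∀ i, 1 ≤ i → q i ∈ Set.Ioo (0 : ℝ) 1)
    (hpq : ∀ i, 1 ≤ i → p i + q i = 1) (hp0 : p 0 = 1)
    (μ : ℕ → Measure (ℕ → ℕ)) (hμ : ∀ i, IsProbabilityMeasure (μ i))
    (hlaw : IsRFLaw p q μ)
    (hb : ¬ Summable (fun n : ℕ => bseq p q (n + 1))) :
    ∀ i j : ℕ, μ i {ω : ℕ → ℕ | {n : ℕ | ω n = j}.Infinite} = 1 := by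
  intro i j
  haveI := hμ i
  have hnull : μ i (⋃ N : ℕ, {ω : ℕ → ℕ | ∀ n, N+1 ≤ n → ω n ≠ j}) = 0 :=
    measure_iUnion_null fun N => avoid_null p q hp hq hpq hp0 μ hlaw hμ hb j i N
  have hsub : {ω : ℕ → ℕ | {n : ℕ | ω n = j}.Infinite}ᶜ ⊆
      ⋃ N : ℕ, {ω : ℕ → ℕ | ∀ n, N+1 ≤ n → ω n ≠ j} := by
    intro ω hω
    simp only [Set.mem_compl_iff, Set.mem_setOf_eq, Set.not_infinite] at hω
    obtain ⟨N, hN⟩ := hω.bddAbove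
    refine Set.mem_iUnion.mpr ⟨N, fun n hn hval => ?_⟩
    have : n ≤ N := hN hval
    omega
  have h0 : μ i {ω : ℕ → ℕ | {n : ℕ | ω n = j}.Infinite}ᶜ = 0 :=
    measure_mono_null hsub hnull
  have hle := measure_union_le (μ := μ i) {ω : ℕ → ℕ | {n : ℕ | ω n = j}.Infinite}
    {ω : ℕ → ℕ | {n : ℕ | ω n = j}.Infinite}ᶜ
  rw [Set.union_compl_self, measure_univ, h0, add_zero] at hle
  exact le_antisymm prob_le_one hle
end
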